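/- For every m ≥ 1 there exist a homeomorphism h : ℝ^m → ℝ^m and a countable set A ⊆ ℝ^m such that A is not a conical limit set but h(A) is a conical limit set. In particular, the class of conical limit sets is not invariant under homeomorphisms. -/

import Mathlib

open Filter Topology


/-- The open upper half-space over a normed space `V`: pairs `(t, v)` with `t > 0`. -/
def upperHalf (V : Type*) [NormedAddCommGroup V] : Set (ℝ × V) := {p | 0 < p.1}

/-- The conical limit set of `E ⊆ ℝ × V`: points `x` for which there are `C > 0` and a
sequence `(t_n, v_n)` in `E` with `t_n → 0`, `v_n → x` and `‖v_n - x‖ ≤ C * t_n`. -/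
def conicalLimitSet {V : Type*} [NormedAddCommGroup V] (E : Set (ℝ × V)) : Set V :=
  {x | ∃ C > 0, ∃ w : ℕ → ℝ × V, (∀ n, w n ∈ E) ∧
    Tendsto (fun n => (w n).1) atTop (𝓝 (0 : ℝ)) ∧
    Tendsto (fun n => (w n).2) atTop (𝓝 x) ∧
    ∀ n, ‖(w n).2 - x‖ ≤ C * (w n).1}

/-- `X ⊆ V` is a conical limit set if it is the conical limit set of some subset of the
upper half-space. -/
def IsConicalLimitSet {V : Type*} [NormedAddCommGroup V] (X : Set V) : Prop :=
  ∃ E ⊆ upperHalf V, conicalLimitSet E = X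

namespace CCLaux

noncomputable section

/-- A scale system for a Cantor-type set on `[0,1]`. -/
structure Sys where
  σ : ℕ → ℝ
  σ0 : σ 0 = 1
  pos : ∀ n, 0 < σ n
  half : ∀ n, 2 * σ (n+1) < σ n

namespace Sys

variable (S : Sys)

def χ (n : ℕ) : ℝ := S.σ n - S.σ (n+1)

def γ (n : ℕ) : ℝ := S.σ n - 2 * S.σ (n+1)

lemma γ_pos (n : ℕ) : 0 < S.γ n := by
  have := S.half n; unfold γ; linarith

lemma σ_succ_lt (n : ℕ) : S.σ (n+1) < S.σ n := by
  have := S.half n; have := S.pos (n+1); linarith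

lemma σ_anti : StrictAnti S.σ := strictAnti_nat_of_succ_lt S.σ_succ_lt

lemma χ_pos (n : ℕ) : 0 < S.χ n := by
  have := S.σ_succ_lt n; unfold χ; linarith

lemma χ_le_σ (n : ℕ) : S.χ n ≤ S.σ n := by
  have := S.pos (n+1); unfold χ; linarith

lemma σ_succ_lt_χ (n : ℕ) : S.σ (n+1) < S.χ n := by
  have := S.half n; unfold χ; linarith

lemma χ_anti : ∀ {a b : ℕ}, a ≤ b → S.χ b ≤ S.χ a := by
  intro a b hab
  have h1 : S.χ b ≤ S.σ b := S.χ_le_σ b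
  have h2 : S.σ b ≤ S.σ (a+1) ∨ b = a := by
    rcases lt_or_eq_of_le hab with h | h
    · exact Or.inl (S.σ_anti.antitone h)
    · exact Or.inr h.symm
  rcases h2 with h | h
  · have := S.σ_succ_lt_χ a; unfold χ at *; linarith [S.pos (b+1)]
  · subst h; exact le_refl _

lemma σ_le_pow (n : ℕ) : S.σ n ≤ (1/2)^n := by
  induction n with
  | zero => simp [S.σ0]
  | succ k ih =>
    have h := S.half k
    have : S.σ (k+1) ≤ S.σ k / 2 := by linarith
    calc S.σ (k+1) ≤ S.σ k / 2 := this
    _ ≤ (1/2)^k / 2 := by linarith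
    _ = (1/2)^(k+1) := by ring

lemma σ_tendsto : Tendsto S.σ atTop (𝓝 0) := by
  have h1 : Tendsto (fun n : ℕ => ((1:ℝ)/2)^n) atTop (𝓝 0) :=
    tendsto_pow_atTop_nhds_zero_of_lt_one (by norm_num) (by norm_num)
  refine squeeze_zero (fun n => (S.pos n).le) (fun n => S.σ_le_pow n) h1

def term (d : ℕ → Bool) (k : ℕ) : ℝ := if d k then S.χ k else 0

lemma term_nonneg (d : ℕ → Bool) (k : ℕ) : 0 ≤ S.term d k := by
  unfold term; split <;> simp [le_of_lt (S.χ_pos k)]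

lemma term_le_χ (d : ℕ → Bool) (k : ℕ) : S.term d k ≤ S.χ k := by
  unfold term; split <;> simp [le_of_lt (S.χ_pos k)]

lemma sum_range_χ (n : ℕ) : ∑ k ∈ Finset.range n, S.χ k = S.σ 0 - S.σ n := by
  have := Finset.sum_range_sub' S.σ n
  simpa [χ] using this

lemma sum_Ico_χ {a b : ℕ} (h : a ≤ b) :
    ∑ k ∈ Finset.Ico a b, S.χ k = S.σ a - S.σ b := by
  rw [Finset.sum_Ico_eq_sub _ h, S.sum_range_χ, S.sum_range_χ]; ring

lemma summable_χ : Summable S.χ := by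
  apply summable_of_sum_range_le (fun n => (S.χ_pos n).le)
  intro n
  rw [S.sum_range_χ]
  have := S.pos n; linarith

lemma summable_term (d : ℕ → Bool) : Summable (S.term d) :=
  Summable.of_nonneg_of_le (S.term_nonneg d) (S.term_le_χ d) S.summable_χ

lemma hasSum_χ_tail (n : ℕ) : HasSum (fun k => S.χ (k + n)) (S.σ n) := by
  have hsum : Summable (fun k => S.χ (k + n)) := (summable_nat_add_iff n).mpr S.summable_χ
  have h1 : Tendsto (fun K => ∑ i ∈ Finset.range K, S.χ (i + n)) atTop (𝓝 (∑' k, S.χ (k + n))) :=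
    hsum.hasSum.tendsto_sum_nat
  have h2 : ∀ K, ∑ i ∈ Finset.range K, S.χ (i + n) = S.σ n - S.σ (n + K) := by
    intro K
    have : ∑ i ∈ Finset.range K, S.χ (i + n) = ∑ k ∈ Finset.Ico n (n + K), S.χ k := by
      rw [Finset.sum_Ico_eq_sum_range]
      simp [add_comm]
    rw [this, S.sum_Ico_χ (Nat.le_add_right n K)]
  have h3 : Tendsto (fun K => S.σ n - S.σ (n + K)) atTop (𝓝 (S.σ n - 0)) := by
    apply Tendsto.const_sub
    exact S.σ_tendsto.comp (tendsto_add_atTop_nat n |>.comp tendsto_id) |>.congr (by intro x; simp [add_comm])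
  have h4 : Tendsto (fun K => ∑ i ∈ Finset.range K, S.χ (i + n)) atTop (𝓝 (S.σ n)) := by
    simpa [h2] using h3
  have := tendsto_nhds_unique h1 h4
  rw [← this]; exact hsum.hasSum

def ψ (d : ℕ → Bool) : ℝ := ∑' k, S.term d k

lemma ψ_split (d : ℕ → Bool) (n : ℕ) :
    S.ψ d = ∑ k ∈ Finset.range n, S.term d k + ∑' k, S.term d (k + n) := by
  exact (Summable.sum_add_tsum_nat_add n (S.summable_term d)).symm

lemma tail_nonneg (d : ℕ → Bool) (n : ℕ) : 0 ≤ ∑' k, S.term d (k + n) :=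
  tsum_nonneg (fun k => S.term_nonneg d _)

lemma tail_le (d : ℕ → Bool) (n : ℕ) : ∑' k, S.term d (k + n) ≤ S.σ n := by
  have := Summable.tsum_le_tsum (f := fun k => S.term d (k + n)) (g := fun k => S.χ (k + n))
    (fun k => S.term_le_χ d _) ((summable_nat_add_iff n).mpr (S.summable_term d))
    ((summable_nat_add_iff n).mpr S.summable_χ)
  rwa [(S.hasSum_χ_tail n).tsum_eq] at this

lemma partial_le_ψ (d : ℕ → Bool) (n : ℕ) :
    ∑ k ∈ Finset.range n, S.term d k ≤ S.ψ d := by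
  rw [S.ψ_split d n]; linarith [S.tail_nonneg d n]

lemma ψ_le_partial_add (d : ℕ → Bool) (n : ℕ) :
    S.ψ d ≤ ∑ k ∈ Finset.range n, S.term d k + S.σ n := by
  rw [S.ψ_split d n]; linarith [S.tail_le d n]

lemma ψ_nonneg (d : ℕ → Bool) : 0 ≤ S.ψ d := tsum_nonneg (S.term_nonneg d)

lemma ψ_le_one (d : ℕ → Bool) : S.ψ d ≤ 1 := by
  have := S.ψ_le_partial_add d 0
  simpa [S.σ0] using this

end Sys


namespace Sys

variable (S : Sys)

/-- digits of the lower endpoint of the gap at level `n` of the cylinder of `w`. -/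
def lowEnd' (w : ℕ → Bool) (n : ℕ) : ℕ → Bool :=
  fun k => if k < n then w k else if k = n then false else true

def highEnd' (w : ℕ → Bool) (n : ℕ) : ℕ → Bool :=
  fun k => if k < n then w k else if k = n then true else false

def base (w : ℕ → Bool) (n : ℕ) : ℝ := ∑ k ∈ Finset.range n, S.term w k

lemma base_nonneg (w : ℕ → Bool) (n : ℕ) : 0 ≤ S.base w n :=
  Finset.sum_nonneg (fun k _ => S.term_nonneg w k)

def lowPt (w : ℕ → Bool) (n : ℕ) : ℝ := S.base w n + S.σ (n+1)

def highPt (w : ℕ → Bool) (n : ℕ) : ℝ := S.base w n + S.χ n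

lemma highPt_sub_lowPt (w : ℕ → Bool) (n : ℕ) : S.highPt w n - S.lowPt w n = S.γ n := by
  unfold highPt lowPt χ γ; ring

lemma lowPt_lt_highPt (w : ℕ → Bool) (n : ℕ) : S.lowPt w n < S.highPt w n := by
  have := S.γ_pos n; have := S.highPt_sub_lowPt w n; linarith

lemma base_congr {w w' : ℕ → Bool} (n : ℕ) (h : ∀ k < n, w k = w' k) :
    S.base w n = S.base w' n := by
  unfold base; apply Finset.sum_congr rfl
  intro k hk; unfold term; rw [h k (Finset.mem_range.mp hk)]

lemma ψ_lowEnd (w : ℕ → Bool) (n : ℕ) : S.ψ (Sys.lowEnd' w n) = S.lowPt w n := by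
  rw [S.ψ_split (Sys.lowEnd' w n) (n+1)]
  have h1 : ∑ k ∈ Finset.range (n+1), S.term (Sys.lowEnd' w n) k = S.base w n := by
    rw [Finset.sum_range_succ]
    have h2 : S.term (Sys.lowEnd' w n) n = 0 := by
      unfold term lowEnd'; simp
    rw [h2, add_zero]
    apply Finset.sum_congr rfl
    intro k hk
    unfold term lowEnd'
    rw [if_pos (Finset.mem_range.mp hk)]
  have h3 : (fun k => S.term (Sys.lowEnd' w n) (k + (n+1))) = fun k => S.χ (k + (n+1)) := by
    funext k
    unfold term lowEnd'
    have hk1 : ¬ (k + (n+1) < n) := by omega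
    have hk2 : ¬ (k + (n+1) = n) := by omega
    simp [hk1, hk2]
  rw [h1, h3, (S.hasSum_χ_tail (n+1)).tsum_eq]
  rfl

lemma ψ_highEnd (w : ℕ → Bool) (n : ℕ) : S.ψ (Sys.highEnd' w n) = S.highPt w n := by
  rw [S.ψ_split (Sys.highEnd' w n) (n+1)]
  have h1 : ∑ k ∈ Finset.range (n+1), S.term (Sys.highEnd' w n) k = S.base w n + S.χ n := by
    rw [Finset.sum_range_succ]
    have h2 : S.term (Sys.highEnd' w n) n = S.χ n := by
      unfold term highEnd'; simp
    rw [h2]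
    congr 1
    apply Finset.sum_congr rfl
    intro k hk
    unfold term highEnd'
    rw [if_pos (Finset.mem_range.mp hk)]
  have h3 : (fun k => S.term (Sys.highEnd' w n) (k + (n+1))) = fun _ => (0:ℝ) := by
    funext k
    unfold term highEnd'
    have hk1 : ¬ (k + (n+1) < n) := by omega
    have hk2 : ¬ (k + (n+1) = n) := by omega
    simp [hk1, hk2]
  rw [h1, h3, tsum_zero, add_zero]
  rfl

/-- bound: sum of terms over `Ico a b` is between `0` and `σ a - σ b`. -/
lemma sum_Ico_term_le (w : ℕ → Bool) {a b : ℕ} (h : a ≤ b) :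
    ∑ k ∈ Finset.Ico a b, S.term w k ≤ S.σ a - S.σ b := by
  rw [← S.sum_Ico_χ h]
  exact Finset.sum_le_sum (fun k _ => S.term_le_χ w k)

lemma base_split (w : ℕ → Bool) {a b : ℕ} (h : a ≤ b) :
    S.base w b = S.base w a + ∑ k ∈ Finset.Ico a b, S.term w k := by
  unfold base
  simp only [Finset.range_eq_Ico]
  exact (Finset.sum_Ico_consecutive _ (Nat.zero_le a) h).symm

/-- If `e` and `w` agree below `j` and `e j = true` then `ψ e ≥ base_j + χ j`. -/
lemma ψ_ge_of_true {e w : ℕ → Bool} {j : ℕ} (hagree : ∀ k < j, e k = w k)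
    (hj : e j = true) : S.base w j + S.χ j ≤ S.ψ e := by
  have h1 : ∑ k ∈ Finset.range (j+1), S.term e k = S.base w j + S.χ j := by
    rw [Finset.sum_range_succ]
    congr 1
    · rw [← S.base_congr j hagree]; rfl
    · unfold term; rw [hj]; simp
  have := S.partial_le_ψ e (j+1)
  rw [h1] at this; exact this

/-- If `e` and `w` agree below `j` and `e j = false` then `ψ e ≤ base_j + σ (j+1)`. -/
lemma ψ_le_of_false {e w : ℕ → Bool} {j : ℕ} (hagree : ∀ k < j, e k = w k)
    (hj : e j = false) : S.ψ e ≤ S.base w j + S.σ (j+1) := by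
  have h1 : ∑ k ∈ Finset.range (j+1), S.term e k = S.base w j := by
    rw [Finset.sum_range_succ]
    have h2 : S.term e j = 0 := by unfold term; rw [hj]; simp
    rw [h2, add_zero, ← S.base_congr j hagree]; rfl
  have := S.ψ_le_partial_add e (j+1)
  rw [h1] at this; exact this

/-- The fundamental gap lemma: no point `ψ e` lies strictly inside a gap. -/
lemma gap_lemma (w : ℕ → Bool) (n : ℕ) (e : ℕ → Bool) :
    S.ψ e ≤ S.lowPt w n ∨ S.highPt w n ≤ S.ψ e := by
  by_cases hagree : ∀ k < n, e k = w k
  · cases he : e n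
    · left
      have := S.ψ_le_of_false hagree he
      unfold lowPt; linarith
    · right
      have := S.ψ_ge_of_true hagree he
      unfold highPt; linarith
  · -- first disagreement
    push_neg at hagree
    have hex : ∃ j, j < n ∧ e j ≠ w j := by
      obtain ⟨j, hj, hne⟩ := hagree; exact ⟨j, hj, hne⟩
    classical
    set j := Nat.find hex with hjdef
    obtain ⟨hjn, hjne⟩ := Nat.find_spec hex
    have hagr : ∀ k < j, e k = w k := by
      intro k hk
      by_contra hc
      have : k < n := lt_trans hk hjn
      exact Nat.find_min hex hk ⟨this, hc⟩
    have hbase : S.base w n = S.base w j + ∑ k ∈ Finset.Ico j n, S.term w k :=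
      S.base_split w (le_of_lt hjn)
    cases hej : e j
    · -- e j = false, w j = true
      have hwj : w j = true := by
        cases hwj : w j
        · exact absurd (hej.trans hwj.symm) hjne
        · rfl
      left
      have h1 : S.ψ e ≤ S.base w j + S.σ (j+1) := S.ψ_le_of_false hagr hej
      have h2 : S.χ j ≤ ∑ k ∈ Finset.Ico j n, S.term w k := by
        have hmem : j ∈ Finset.Ico j n := Finset.mem_Ico.mpr ⟨le_refl j, hjn⟩
        have := Finset.single_le_sum (f := S.term w) (fun k _ => S.term_nonneg w k) hmem
        have ht : S.term w j = S.χ j := by unfold term; rw [hwj]; simp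
        rw [ht] at this; exact this
      have h3 : S.σ (j+1) < S.χ j := S.σ_succ_lt_χ j
      have h4 : 0 < S.σ (n+1) := S.pos (n+1)
      unfold lowPt
      rw [hbase]
      linarith
    · -- e j = true, w j = false
      have hwj : w j = false := by
        cases hwj : w j
        · rfl
        · exact absurd (hej.trans hwj.symm) hjne
      right
      have h1 : S.base w j + S.χ j ≤ S.ψ e := S.ψ_ge_of_true hagr hej
      have h2 : ∑ k ∈ Finset.Ico j n, S.term w k ≤ S.σ (j+1) - S.σ n := by
        rw [Finset.sum_eq_sum_Ico_succ_bot hjn]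
        have ht : S.term w j = 0 := by unfold term; rw [hwj]; simp
        rw [ht, zero_add]
        exact S.sum_Ico_term_le w hjn
      have h3 : S.χ n = S.σ n - S.σ (n+1) := rfl
      have h4 : S.σ (j+1) < S.χ j := S.σ_succ_lt_χ j
      have h5 : 0 < S.σ (n+1) := S.pos (n+1)
      unfold highPt
      rw [hbase]
      linarith

lemma ψ_injective : Function.Injective S.ψ := by
  intro e d h
  by_contra hne
  have hex : ∃ j, e j ≠ d j := by
    by_contra hc; push_neg at hc; exact hne (funext hc)
  classical
  set j := Nat.find hex with hjdef
  have hjne := Nat.find_spec hex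
  have hagr : ∀ k < j, e k = d k := by
    intro k hk
    by_contra hc
    exact Nat.find_min hex hk hc
  have key : ∀ (a b : ℕ → Bool), (∀ k < j, a k = b k) → a j = false → b j = true →
      S.ψ a < S.ψ b := by
    intro a b hab ha hb
    have h1 : S.ψ a ≤ S.base b j + S.σ (j+1) := S.ψ_le_of_false hab ha
    have h2 : S.base b j + S.χ j ≤ S.ψ b := S.ψ_ge_of_true (fun k _ => rfl) hb
    have h3 : S.σ (j+1) < S.χ j := S.σ_succ_lt_χ j
    linarith
  cases hej : e j <;> cases hdj : d j
  · exact hjne (hej.trans hdj.symm)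
  · have := key e d hagr hej hdj; rw [h] at this; exact lt_irrefl _ this
  · have := key d e (fun k hk => (hagr k hk).symm) hdj hej; rw [h] at this; exact lt_irrefl _ this
  · exact hjne (hej.trans hdj.symm)

end Sys


namespace Sys

variable (S : Sys)

open Classical in
/-- greedy partial sums -/
def gb (x : ℝ) : ℕ → ℝ
  | 0 => 0
  | n+1 => gb x n + if gb x n + S.χ n ≤ x then S.χ n else 0

lemma gb_zero (x : ℝ) : S.gb x 0 = 0 := rfl

open Classical in
lemma gb_succ_def (x : ℝ) (n : ℕ) :
    S.gb x (n+1) = S.gb x n + if S.gb x n + S.χ n ≤ x then S.χ n else 0 := rfl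

open Classical in
/-- greedy digits -/
def gd (x : ℝ) (n : ℕ) : Bool := if S.gb x n + S.χ n ≤ x then true else false

lemma gd_true_iff (x : ℝ) (n : ℕ) : S.gd x n = true ↔ S.gb x n + S.χ n ≤ x := by
  unfold gd; split <;> simp_all

lemma gd_false_iff (x : ℝ) (n : ℕ) : S.gd x n = false ↔ x < S.gb x n + S.χ n := by
  unfold gd; split <;> simp_all <;> linarith

lemma gb_succ (x : ℝ) (n : ℕ) :
    S.gb x (n+1) = S.gb x n + S.term (S.gd x) n := by
  rw [S.gb_succ_def]
  unfold term gd
  split <;> simp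

lemma gb_eq_base (x : ℝ) (n : ℕ) : S.gb x n = S.base (S.gd x) n := by
  induction n with
  | zero => rfl
  | succ k ih =>
    rw [S.gb_succ x k, ih]
    unfold base
    rw [Finset.sum_range_succ]

/-- if digits of x agree with digits of y below n then gb agree up to n -/
lemma gb_congr {x y : ℝ} (n : ℕ) (h : ∀ k < n, S.gd x k = S.gd y k) :
    S.gb x n = S.gb y n := by
  rw [S.gb_eq_base, S.gb_eq_base]
  exact S.base_congr n h

lemma gb_le {x : ℝ} (hx : 0 ≤ x) (n : ℕ) : S.gb x n ≤ x := by
  induction n with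
  | zero => exact hx
  | succ k ih =>
    rw [S.gb_succ_def]
    split
    · assumption
    · simpa using ih

/-- Case A: if the greedy sums never fail, then `x` is in the Cantor set. -/
lemma greedy_mem {x : ℝ} (hx : 0 ≤ x) (h : ∀ n, x ≤ S.gb x n + S.σ n) :
    x = S.ψ (S.gd x) := by
  have hb : ∀ n, |S.ψ (S.gd x) - x| ≤ 2 * S.σ n := by
    intro n
    have h1 : S.base (S.gd x) n ≤ S.ψ (S.gd x) := S.partial_le_ψ _ n
    have h2 : S.ψ (S.gd x) ≤ S.base (S.gd x) n + S.σ n := S.ψ_le_partial_add _ n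
    have h3 : S.gb x n ≤ x := S.gb_le hx n
    have h4 : x ≤ S.gb x n + S.σ n := h n
    rw [S.gb_eq_base] at h3 h4
    rw [abs_le]; constructor <;> linarith
  by_contra hne
  have hδ : 0 < |S.ψ (S.gd x) - x| := by
    apply abs_pos.mpr
    intro hc
    exact hne (sub_eq_zero.mp hc).symm
  obtain ⟨n, hn⟩ := (S.σ_tendsto.eventually (gt_mem_nhds (show 0 < |S.ψ (S.gd x) - x| / 2 by linarith))).exists
  have := hb n
  linarith

/-- after a strict failure all digits are `true` and failures persist -/
lemma failure_persists {x : ℝ} {k : ℕ} (h : S.gb x k + S.σ k < x) :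
    ∀ k' , k ≤ k' → (S.gb x k' + S.σ k' < x ∧ S.gd x k' = true) := by
  intro k' hk'
  induction k' , hk' using Nat.le_induction with
  | base =>
    refine ⟨h, ?_⟩
    rw [S.gd_true_iff]
    have := S.χ_le_σ k
    linarith
  | succ j hj ih =>
    obtain ⟨hlt, htrue⟩ := ih
    have hgb : S.gb x (j+1) = S.gb x j + S.χ j := by
      rw [S.gb_succ]
      congr 1
      unfold term
      rw [htrue]
      simp
    have hnew : S.gb x (j+1) + S.σ (j+1) < x := by
      rw [hgb]
      have : S.χ j + S.σ (j+1) = S.σ j := by unfold χ; ring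
      linarith
    refine ⟨hnew, ?_⟩
    rw [S.gd_true_iff]
    have := S.χ_le_σ (j+1)
    linarith

/-- digits with a last `false` at `m` give an exact value. -/
lemma ψ_pattern {d : ℕ → Bool} {m : ℕ} (hm : d m = false) (htail : ∀ k, m < k → d k = true) :
    S.ψ d = S.base d m + S.σ (m+1) := by
  have : d = lowEnd' d m := by
    funext k
    unfold lowEnd'
    rcases lt_trichotomy k m with h | h | h
    · rw [if_pos h]
    · subst h; simp [hm]
    · rw [if_neg (by omega), if_neg (by omega)]
      exact htail k h
  conv_lhs => rw [this]
  rw [S.ψ_lowEnd]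
  rfl

/-- Case B: the greedy algorithm fails iff `x` is in a gap; gives gap data. -/
lemma greedy_gap {x : ℝ} (hx1 : x ≤ 1) (hB : ∃ n, S.gb x n + S.σ n < x) :
    ∃ m, S.gd x m = false ∧ (∀ k, m < k → S.gd x k = true) ∧
      S.gb x m + S.σ (m+1) < x ∧ x < S.gb x m + S.χ m ∧
      S.ψ (S.gd x) = S.gb x m + S.σ (m+1) := by
  classical
  have h0 : ¬ (S.gb x 0 + S.σ 0 < x) := by
    show ¬ ((0:ℝ) + S.σ 0 < x)
    rw [S.σ0]
    linarith
  set N := Nat.find hB with hN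
  have hspec := Nat.find_spec hB
  have hmin : ∀ k < N, ¬ (S.gb x k + S.σ k < x) := fun k hk => Nat.find_min hB hk
  have hNpos : N ≠ 0 := by
    intro hc
    rw [← hN] at hspec
    rw [hc] at hspec
    exact h0 hspec
  obtain ⟨m, hm⟩ := Nat.exists_eq_succ_of_ne_zero hNpos
  rw [← hN, hm] at hspec
  have hmlt : x ≤ S.gb x m + S.σ m := by
    have := hmin m (by omega)
    linarith [not_lt.mp this]
  have hdm : S.gd x m = false := by
    by_contra hc
    have htrue : S.gd x m = true := by
      cases h : S.gd x m
      · exact absurd h hc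
      · rfl
    have hgb : S.gb x (m+1) = S.gb x m + S.χ m := by
      rw [S.gb_succ]
      congr 1
      unfold term; rw [htrue]; simp
    rw [hgb] at hspec
    have : S.χ m + S.σ (m+1) = S.σ m := by unfold χ; ring
    linarith
  have hgbeq : S.gb x (m+1) = S.gb x m := by
    rw [S.gb_succ]
    have : S.term (S.gd x) m = 0 := by unfold term; rw [hdm]; simp
    rw [this, add_zero]
  rw [hgbeq] at hspec
  have htail : ∀ k, m < k → S.gd x k = true := by
    intro k hk
    have := S.failure_persists (x := x) (k := m+1) (by rw [hgbeq]; exact hspec) k hk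
    exact this.2
  have hlt2 : x < S.gb x m + S.χ m := (S.gd_false_iff x m).mp hdm
  refine ⟨m, hdm, htail, hspec, hlt2, ?_⟩
  rw [S.ψ_pattern hdm htail, ← S.gb_eq_base]

/-- The greedy digits of `ψ e` recover `e`. -/
lemma gd_ψ (e : ℕ → Bool) : S.gd (S.ψ e) = e := by
  have key : ∀ k, S.gd (S.ψ e) k = e k := by
    intro k
    induction k using Nat.strong_induction_on with
    | _ k IH =>
      have hgb : S.gb (S.ψ e) k = S.base e k := by
        rw [S.gb_eq_base]
        exact S.base_congr k (fun k' hk' => IH k' hk')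
      cases he : e k
      · rw [S.gd_false_iff, hgb]
        have h1 : S.ψ e ≤ S.base e k + S.σ (k+1) := S.ψ_le_of_false (fun _ _ => rfl) he
        have h2 := S.σ_succ_lt_χ k
        linarith
      · rw [S.gd_true_iff, hgb]
        exact S.ψ_ge_of_true (fun _ _ => rfl) he
  funext k; exact key k

/-- Greedy digits inside a prescribed gap. -/
lemma greedy_follow {w : ℕ → Bool} {m : ℕ} {u : ℝ}
    (hu1 : S.lowPt w m < u) (hu2 : u < S.highPt w m) :
    (∀ k < m, S.gd u k = w k) ∧ S.gb u m = S.base w m := by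
  have main : ∀ k ≤ m, (∀ k' < k, S.gd u k' = w k') ∧ S.gb u k = S.base w k := by
    intro k hk
    induction k with
    | zero => exact ⟨fun k' hk' => absurd hk' (Nat.not_lt_zero k'), rfl⟩
    | succ j ihj =>
      have hjm : j ≤ m := by omega
      obtain ⟨hdig, hgb⟩ := ihj (by omega)
      have hjlt : j < m := by omega
      have hstep : S.gd u j = w j := by
        cases hwj : w j
        · -- w j = false : need u < gb + χ j
          rw [S.gd_false_iff, hgb]
          have hbm : S.base w m ≤ S.base w j + (S.σ (j+1) - S.σ m) := by
            rw [S.base_split w (le_of_lt hjlt)]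
            have : ∑ k' ∈ Finset.Ico j m, S.term w k' ≤ S.σ (j+1) - S.σ m := by
              rw [Finset.sum_eq_sum_Ico_succ_bot hjlt]
              have ht : S.term w j = 0 := by unfold term; rw [hwj]; simp
              rw [ht, zero_add]
              exact S.sum_Ico_term_le w hjlt
            linarith
          have hχm : S.χ m = S.σ m - S.σ (m+1) := rfl
          have h2 := S.σ_succ_lt_χ j
          have h3 := S.pos (m+1)
          unfold highPt at hu2
          linarith
        · -- w j = true : need gb + χ j ≤ u
          rw [S.gd_true_iff, hgb]
          have hbm : S.base w j + S.χ j ≤ S.base w m := by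
            rw [S.base_split w (le_of_lt hjlt), Finset.sum_eq_sum_Ico_succ_bot hjlt]
            have ht : S.term w j = S.χ j := by unfold term; rw [hwj]; simp
            rw [ht]
            have : 0 ≤ ∑ k' ∈ Finset.Ico (j+1) m, S.term w k' :=
              Finset.sum_nonneg (fun k' _ => S.term_nonneg w k')
            linarith
          have h3 := S.pos (m+1)
          unfold lowPt at hu1
          linarith
      refine ⟨?_, ?_⟩
      · intro k' hk'
        rcases Nat.lt_succ_iff_lt_or_eq.mp hk' with h | h
        · exact hdig k' h
        · subst h; exact hstep
      · rw [S.gb_succ, hgb]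
        have hterm : S.term (S.gd u) j = S.term w j := by
          unfold term; rw [hstep]
        rw [hterm, S.base_split w (Nat.le_succ j), Finset.sum_eq_sum_Ico_succ_bot (Nat.lt_succ_self j)]
        simp
  exact ⟨(main m le_rfl).1, (main m le_rfl).2⟩

/-- full gap description for `u` strictly inside a gap. -/
lemma greedy_follow_full {w : ℕ → Bool} {m : ℕ} {u : ℝ}
    (hu1 : S.lowPt w m < u) (hu2 : u < S.highPt w m) :
    S.gd u m = false ∧ (∀ k, m < k → S.gd u k = true) ∧
      S.ψ (S.gd u) = S.lowPt w m := by
  obtain ⟨hdig, hgb⟩ := S.greedy_follow hu1 hu2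
  have hdm : S.gd u m = false := by
    rw [S.gd_false_iff, hgb]
    unfold highPt at hu2
    exact hu2
  have hgbsucc : S.gb u (m+1) = S.base w m := by
    rw [S.gb_succ, hgb]
    have : S.term (S.gd u) m = 0 := by unfold term; rw [hdm]; simp
    rw [this, add_zero]
  have hfail : S.gb u (m+1) + S.σ (m+1) < u := by
    rw [hgbsucc]
    unfold lowPt at hu1
    linarith
  have htail : ∀ k, m < k → S.gd u k = true := by
    intro k hk
    exact (S.failure_persists hfail k hk).2
  refine ⟨hdm, htail, ?_⟩
  rw [S.ψ_pattern hdm htail, ← S.gb_eq_base, hgb]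
  rfl

end Sys

namespace Sys

variable (S : Sys)

lemma base_le (e : ℕ → Bool) (j : ℕ) : S.base e j ≤ S.σ 0 - S.σ j := by
  unfold base
  rw [← S.sum_range_χ j]
  exact Finset.sum_le_sum (fun k _ => S.term_le_χ e k)

lemma ψ_pos_of_true {e : ℕ → Bool} {j : ℕ} (hj : e j = true) : 0 < S.ψ e := by
  have h1 := S.ψ_ge_of_true (w := e) (fun _ _ => rfl) hj
  have h2 := S.base_nonneg e j
  have h3 := S.χ_pos j
  linarith

lemma ψ_lt_one_of_false {e : ℕ → Bool} {j : ℕ} (hj : e j = false) : S.ψ e < 1 := by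
  have h1 := S.ψ_le_of_false (w := e) (fun _ _ => rfl) hj
  have h2 := S.base_le e j
  have h3 := S.σ_succ_lt j
  rw [S.σ0] at h2
  linarith

lemma all_false_of_ψ_eq_zero {e : ℕ → Bool} (h : S.ψ e = 0) : ∀ k, e k = false := by
  intro k
  cases hk : e k
  · rfl
  · have := S.ψ_pos_of_true hk; linarith

lemma all_true_of_ψ_eq_one {e : ℕ → Bool} (h : S.ψ e = 1) : ∀ k, e k = true := by
  intro k
  cases hk : e k
  · have := S.ψ_lt_one_of_false hk; linarith
  · rfl

lemma ψ_all_false {e : ℕ → Bool} (h : ∀ k, e k = false) : S.ψ e = 0 := by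
  unfold ψ
  have : (fun k => S.term e k) = fun _ => (0:ℝ) := by
    funext k; unfold term; rw [h k]; simp
  rw [this, tsum_zero]

lemma ψ_all_true {e : ℕ → Bool} (h : ∀ k, e k = true) : S.ψ e = 1 := by
  unfold ψ
  have : (fun k => S.term e k) = fun k => S.χ (k + 0) := by
    funext k; unfold term; rw [h k]; simp
  rw [this, (S.hasSum_χ_tail 0).tsum_eq, S.σ0]

/-- Dichotomy for a point of `(0,1)`: either in the Cantor set or in a unique gap. -/
lemma dichotomy {x : ℝ} (hx0 : 0 < x) (hx1 : x < 1) :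
    x = S.ψ (S.gd x) ∨
    ∃ m, S.gd x m = false ∧ (∀ k, m < k → S.gd x k = true) ∧
      S.gb x m + S.σ (m+1) < x ∧ x < S.gb x m + S.χ m ∧
      S.ψ (S.gd x) = S.gb x m + S.σ (m+1) := by
  by_cases hB : ∃ n, S.gb x n + S.σ n < x
  · exact Or.inr (S.greedy_gap (le_of_lt hx1) hB)
  · left
    push_neg at hB
    exact S.greedy_mem (le_of_lt hx0) hB

end Sys

/-! ### The two concrete systems -/

def prodF (n : ℕ) : ℝ := ∏ j ∈ Finset.range n, (1 - (1/8:ℝ)^(j+1))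

lemma prodF_factor_bounds (j : ℕ) : (7/8:ℝ) ≤ 1 - (1/8:ℝ)^(j+1) ∧ (1 - (1/8:ℝ)^(j+1)) < 1 := by
  constructor
  · have : (1/8:ℝ)^(j+1) ≤ (1/8:ℝ)^1 := by
      apply pow_le_pow_of_le_one (by norm_num) (by norm_num) (by omega)
    norm_num at this ⊢
    linarith
  · have : (0:ℝ) < (1/8:ℝ)^(j+1) := by positivity
    linarith

lemma prodF_pos (n : ℕ) : 0 < prodF n := by
  apply Finset.prod_pos
  intro j _
  have := (prodF_factor_bounds j).1
  linarith

lemma prodF_succ (n : ℕ) : prodF (n+1) = prodF n * (1 - (1/8:ℝ)^(n+1)) := by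
  unfold prodF
  rw [Finset.prod_range_succ]

def σF (n : ℕ) : ℝ := (1/2)^n * prodF n

lemma σF_pos (n : ℕ) : 0 < σF n := by
  unfold σF
  have := prodF_pos n
  positivity

lemma σF_succ (n : ℕ) : σF (n+1) = σF n * ((1 - (1/8:ℝ)^(n+1))/2) := by
  unfold σF
  rw [prodF_succ]
  ring

def SF : Sys where
  σ := σF
  σ0 := by unfold σF prodF; simp
  pos := σF_pos
  half := by
    intro n
    rw [σF_succ]
    have h1 := σF_pos n
    have h2 := (prodF_factor_bounds n).2
    nlinarith

lemma γF_eq (n : ℕ) : SF.γ n = σF n * (1/8:ℝ)^(n+1) := by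
  show σF n - 2 * σF (n+1) = _
  rw [σF_succ]
  ring

lemma σF_succ_ge (n : ℕ) : (7/16:ℝ) * σF n ≤ σF (n+1) := by
  rw [σF_succ]
  have h1 := σF_pos n
  have h2 := (prodF_factor_bounds n).1
  nlinarith

lemma σF_three (n : ℕ) : σF n / 16 ≤ σF (n+3) := by
  have h0 := σF_pos n
  have h1 := σF_succ_ge n
  have h2 := σF_succ_ge (n+1)
  have h3 := σF_succ_ge (n+2)
  have g1 := σF_pos (n+1)
  have g2 := σF_pos (n+2)
  nlinarith

def σT (n : ℕ) : ℝ := (1/3)^n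

def ST : Sys where
  σ := σT
  σ0 := by unfold σT; simp
  pos := fun n => by unfold σT; positivity
  half := by
    intro n
    unfold σT
    have : ((1:ℝ)/3)^(n+1) = (1/3)^n / 3 := by ring
    rw [this]
    have : (0:ℝ) < (1/3)^n := by positivity
    linarith

lemma γT_eq (n : ℕ) : ST.γ n = (1/3:ℝ)^(n+1) := by
  show σT n - 2 * σT (n+1) = _
  unfold σT
  ring

lemma χT_eq (n : ℕ) : ST.χ n = 2 * (1/3:ℝ)^(n+1) := by
  show σT n - σT (n+1) = _
  unfold σT
  ring

/-! ### The homeomorphism of `ℝ` -/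

open Classical in
def lastF (d : ℕ → Bool) : ℕ :=
  if h : ∃ m, d m = false ∧ ∀ k, m < k → d k = true then h.choose else 0

lemma lastF_eq {d : ℕ → Bool} {m : ℕ} (hm : d m = false) (ht : ∀ k, m < k → d k = true) :
    lastF d = m := by
  classical
  have h : ∃ m, d m = false ∧ ∀ k, m < k → d k = true := ⟨m, hm, ht⟩
  unfold lastF
  rw [dif_pos h]
  obtain ⟨hm', ht'⟩ := h.choose_spec
  by_contra hne
  rcases lt_or_gt_of_ne hne with hlt | hlt
  · rw [ht' m hlt] at hm; exact Bool.noConfusion hm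
  · rw [ht _ hlt] at hm'; exact Bool.noConfusion hm'

def ratioTF (m : ℕ) : ℝ := ST.γ m / SF.γ m

lemma ratioTF_pos (m : ℕ) : 0 < ratioTF m := by
  unfold ratioTF
  exact div_pos (ST.γ_pos m) (SF.γ_pos m)

def fb (x : ℝ) : ℝ := ST.ψ (SF.gd x) + (x - SF.ψ (SF.gd x)) * ratioTF (lastF (SF.gd x))

def ff (x : ℝ) : ℝ := if x ≤ 0 ∨ 1 ≤ x then x else fb x

lemma fψ (e : ℕ → Bool) : ff (SF.ψ e) = ST.ψ e := by
  set x := SF.ψ e with hx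
  have h0 : 0 ≤ x := SF.ψ_nonneg e
  have h1 : x ≤ 1 := SF.ψ_le_one e
  unfold ff
  by_cases hc : x ≤ 0 ∨ 1 ≤ x
  · rw [if_pos hc]
    rcases hc with hc | hc
    · have hx0 : x = 0 := le_antisymm hc h0
      have hall := SF.all_false_of_ψ_eq_zero (hx ▸ hx0)
      rw [hx0, ST.ψ_all_false hall]
    · have hx1 : x = 1 := le_antisymm h1 hc
      have hall := SF.all_true_of_ψ_eq_one (hx ▸ hx1)
      rw [hx1, ST.ψ_all_true hall]
  · rw [if_neg hc]
    unfold fb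
    rw [SF.gd_ψ e]
    rw [← hx]
    ring

/-! ### monotonicity of `ff` -/

lemma gd_compare {x y : ℝ} (hxy : x ≤ y) :
    SF.gd x = SF.gd y ∨
    ∃ j, (∀ k < j, SF.gd x k = SF.gd y k) ∧ SF.gd x j = false ∧ SF.gd y j = true := by
  classical
  by_cases hall : ∀ k, SF.gd x k = SF.gd y k
  · exact Or.inl (funext hall)
  · right
    push_neg at hall
    set j := Nat.find hall with hj
    have hspec := Nat.find_spec hall
    have hagr : ∀ k < j, SF.gd x k = SF.gd y k := fun k hk => by
      by_contra hc
      exact Nat.find_min hall hk hc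
    have hgb : SF.gb x j = SF.gb y j := SF.gb_congr j hagr
    have hxj : SF.gd x j = false := by
      cases hc : SF.gd x j
      · rfl
      · exfalso
        have h1 := (SF.gd_true_iff x j).mp hc
        have h2 : SF.gd y j = true := by
          rw [SF.gd_true_iff, ← hgb]
          linarith
        exact hspec (hc.trans h2.symm)
    have hyj : SF.gd y j = true := by
      cases hc : SF.gd y j
      · exact absurd (hxj.trans hc.symm) hspec
      · rfl
    exact ⟨j, hagr, hxj, hyj⟩

/-- description of `fb x` for `x ∈ (0,1)`: bounds relative to `ψT` of its digits. -/
lemma fb_cases {x : ℝ} (hx0 : 0 < x) (hx1 : x < 1) :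
    (x = SF.ψ (SF.gd x) ∧ fb x = ST.ψ (SF.gd x)) ∨
    (∃ m, SF.gd x m = false ∧ (∀ k, m < k → SF.gd x k = true) ∧
      SF.ψ (SF.gd x) < x ∧ x < SF.ψ (SF.gd x) + SF.γ m ∧
      fb x = ST.ψ (SF.gd x) + (x - SF.ψ (SF.gd x)) * ratioTF m) := by
  rcases SF.dichotomy hx0 hx1 with h | ⟨m, hdm, htail, hlo, hhi, hval⟩
  · left
    refine ⟨h, ?_⟩
    unfold fb
    rw [← h]
    ring
  · right
    refine ⟨m, hdm, htail, ?_, ?_, ?_⟩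
    · rw [hval]; exact hlo
    · rw [hval]
      have : SF.χ m = SF.σ (m+1) + SF.γ m := by
        unfold Sys.χ Sys.γ
        ring
      rw [this] at hhi
      linarith
    · unfold fb
      rw [lastF_eq hdm htail]

lemma fb_gap_upper {x : ℝ} {m : ℕ} (hdm : SF.gd x m = false)
    (htail : ∀ k, m < k → SF.gd x k = true)
    (hhi : x < SF.ψ (SF.gd x) + SF.γ m)
    (hlo : SF.ψ (SF.gd x) < x) :
    ST.ψ (SF.gd x) < ST.ψ (SF.gd x) + (x - SF.ψ (SF.gd x)) * ratioTF m ∧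
    ST.ψ (SF.gd x) + (x - SF.ψ (SF.gd x)) * ratioTF m < ST.ψ (SF.gd x) + ST.γ m := by
  have hr := ratioTF_pos m
  constructor
  · nlinarith
  · have h1 : (x - SF.ψ (SF.gd x)) * ratioTF m < SF.γ m * ratioTF m := by
      apply mul_lt_mul_of_pos_right _ hr
      linarith
    have h2 : SF.γ m * ratioTF m = ST.γ m := by
      unfold ratioTF
      rw [mul_comm, div_mul_cancel₀ _ (ne_of_gt (SF.γ_pos m))]
    linarith

lemma fb_lt_fb {x y : ℝ} (hx0 : 0 < x) (hx1 : x < 1) (hy0 : 0 < y) (hy1 : y < 1)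
    (hxy : x < y) : fb x < fb y := by
  rcases gd_compare (le_of_lt hxy) with heq | ⟨j, hagr, hxj, hyj⟩
  · -- same digits
    rcases fb_cases hx0 hx1 with ⟨hxP, hfx⟩ | ⟨m, hdm, htail, hlo, hhi, hfx⟩ <;>
      rcases fb_cases hy0 hy1 with ⟨hyP, hfy⟩ | ⟨m', hdm', htail', hlo', hhi', hfy⟩
    · exfalso; rw [heq] at hxP; rw [← hyP] at hxP; linarith
    · -- x in P, y in gap, same digits
      rw [hfx, hfy, heq]
      have hr := ratioTF_pos m'
      nlinarith
    · exfalso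
      rw [heq] at hlo
      rw [← hyP] at hlo
      linarith
    · -- both in gaps with identical digits ⇒ same m
      have hmm : m = m' := by
        have := lastF_eq hdm htail
        have h2 := lastF_eq hdm' htail'
        rw [heq] at this
        rw [this] at h2
        exact h2
      subst hmm
      rw [hfx, hfy, heq]
      have hψ : SF.ψ (SF.gd x) = SF.ψ (SF.gd y) := by rw [heq]
      have hr := ratioTF_pos m
      nlinarith
  · -- digits differ first at j : gd x j = false, gd y j = true
    have hbase_eq : ST.base (SF.gd x) j = ST.base (SF.gd y) j := ST.base_congr j hagr
    have hylow : ST.base (SF.gd x) j + ST.χ j ≤ fb y := by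
      have h1 : ST.base (SF.gd x) j + ST.χ j ≤ ST.ψ (SF.gd y) := by
        rw [hbase_eq]
        exact ST.ψ_ge_of_true (fun _ _ => rfl) hyj
      rcases fb_cases hy0 hy1 with ⟨_, hfy⟩ | ⟨m', hdm', htail', hlo', hhi', hfy⟩
      · rw [hfy]; exact h1
      · rw [hfy]
        have := (fb_gap_upper hdm' htail' hhi' hlo').1
        linarith
    have hxhigh : fb x < ST.base (SF.gd x) j + ST.χ j := by
      rcases fb_cases hx0 hx1 with ⟨_, hfx⟩ | ⟨m, hdm, htail, hlo, hhi, hfx⟩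
      · rw [hfx]
        have h1 : ST.ψ (SF.gd x) ≤ ST.base (SF.gd x) j + ST.σ (j+1) :=
          ST.ψ_le_of_false (fun _ _ => rfl) hxj
        have h2 := ST.σ_succ_lt_χ j
        linarith
      · rw [hfx]
        have hup := (fb_gap_upper hdm htail hhi hlo).2
        have hjm : j ≤ m := by
          by_contra hc
          push_neg at hc
          rw [htail j hc] at hxj
          exact Bool.noConfusion hxj
        -- ψT (gd x) + γT m = baseT (gd x) m + χT m
        have hψpat : ST.ψ (SF.gd x) = ST.base (SF.gd x) m + ST.σ (m+1) :=
          ST.ψ_pattern hdm htail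
        have hsum : ST.σ (m+1) + ST.γ m = ST.χ m := by
          show _ = ST.σ m - ST.σ (m+1)
          show ST.σ (m+1) + (ST.σ m - 2 * ST.σ (m+1)) = _
          ring
        rcases Nat.eq_or_lt_of_le hjm with hJ | hJ
        · subst hJ
          have : ST.ψ (SF.gd x) + ST.γ j = ST.base (SF.gd x) j + ST.χ j := by
            rw [hψpat]; linarith
          linarith
        · have hbm : ST.base (SF.gd x) m ≤ ST.base (SF.gd x) j + (ST.σ (j+1) - ST.σ m) := by
            rw [ST.base_split (SF.gd x) (le_of_lt hJ)]
            have : ∑ k ∈ Finset.Ico j m, ST.term (SF.gd x) k ≤ ST.σ (j+1) - ST.σ m := by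
              rw [Finset.sum_eq_sum_Ico_succ_bot hJ]
              have ht : ST.term (SF.gd x) j = 0 := by
                unfold Sys.term; rw [hxj]; simp
              rw [ht, zero_add]
              exact ST.sum_Ico_term_le (SF.gd x) hJ
            linarith
          have h3 := ST.σ_succ_lt_χ j
          have h4 := ST.pos (m+1)
          have h5 : ST.ψ (SF.gd x) + ST.γ m = ST.base (SF.gd x) m + ST.χ m := by
            rw [hψpat]; linarith
          have h6 : ST.χ m = ST.σ m - ST.σ (m+1) := rfl
          linarith
    linarith

lemma fb_pos {x : ℝ} (hx0 : 0 < x) (hx1 : x < 1) : 0 < fb x := by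
  rcases fb_cases hx0 hx1 with ⟨hxP, hfx⟩ | ⟨m, hdm, htail, hlo, hhi, hfx⟩
  · rw [hfx]
    -- x = ψF (gd x) > 0, so some digit is true
    have : ∃ j, SF.gd x j = true := by
      by_contra hc
      push_neg at hc
      have hall : ∀ k, SF.gd x k = false := by
        intro k; cases h : SF.gd x k
        · rfl
        · exact absurd h (by simp [hc k])
      have := SF.ψ_all_false hall
      rw [← hxP] at this
      linarith
    obtain ⟨j, hj⟩ := this
    exact ST.ψ_pos_of_true hj
  · rw [hfx]
    have h1 := (fb_gap_upper hdm htail hhi hlo).1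
    have h2 := ST.ψ_nonneg (SF.gd x)
    linarith

lemma fb_lt_one {x : ℝ} (hx0 : 0 < x) (hx1 : x < 1) : fb x < 1 := by
  rcases fb_cases hx0 hx1 with ⟨hxP, hfx⟩ | ⟨m, hdm, htail, hlo, hhi, hfx⟩
  · rw [hfx]
    have : ∃ j, SF.gd x j = false := by
      by_contra hc
      push_neg at hc
      have hall : ∀ k, SF.gd x k = true := by
        intro k; cases h : SF.gd x k
        · exact absurd h (by simp [hc k])
        · rfl
      have := SF.ψ_all_true hall
      rw [← hxP] at this
      linarith
    obtain ⟨j, hj⟩ := this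
    exact ST.ψ_lt_one_of_false hj
  · rw [hfx]
    have hup := (fb_gap_upper hdm htail hhi hlo).2
    have hψpat : ST.ψ (SF.gd x) = ST.base (SF.gd x) m + ST.σ (m+1) :=
      ST.ψ_pattern hdm htail
    have hb := ST.base_le (SF.gd x) m
    rw [ST.σ0] at hb
    have h4 := ST.pos (m+1)
    have h6 : ST.γ m = ST.σ m - 2 * ST.σ (m+1) := rfl
    linarith

lemma strictMono_ff : StrictMono ff := by
  intro x y hxy
  unfold ff
  by_cases hx : x ≤ 0 ∨ 1 ≤ x <;> by_cases hy : y ≤ 0 ∨ 1 ≤ y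
  · rw [if_pos hx, if_pos hy]; exact hxy
  · rw [if_pos hx, if_neg hy]
    push_neg at hy
    have hy0 : 0 < y := hy.1
    have hy1 : y < 1 := hy.2
    rcases hx with hx | hx
    · have := fb_pos hy0 hy1; linarith
    · linarith
  · rw [if_neg hx, if_pos hy]
    push_neg at hx
    have hx0 : 0 < x := hx.1
    have hx1 : x < 1 := hx.2
    rcases hy with hy | hy
    · linarith
    · have := fb_lt_one hx0 hx1; linarith
  · rw [if_neg hx, if_neg hy]
    push_neg at hx hy
    exact fb_lt_fb hx.1 hx.2 hy.1 hy.2 hxy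

lemma surjective_ff : Function.Surjective ff := by
  intro z
  by_cases hz : z ≤ 0 ∨ 1 ≤ z
  · exact ⟨z, by unfold ff; rw [if_pos hz]⟩
  · push_neg at hz
    have hz0 : 0 < z := hz.1
    have hz1 : z < 1 := hz.2
    rcases ST.dichotomy hz0 hz1 with h | ⟨m, hdm, htail, hlo, hhi, hval⟩
    · exact ⟨SF.ψ (ST.gd z), by rw [fψ, ← h]⟩
    · -- z in a thin gap: map back the corresponding fat gap point
      set w := ST.gd z with hw
      set lowT := ST.gb z m + ST.σ (m+1) with hlowT
      set lowFv := SF.lowPt w m with hlowF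
      set x := lowFv + (z - lowT) * (SF.γ m / ST.γ m) with hxdef
      have hγF := SF.γ_pos m
      have hγT := ST.γ_pos m
      have hz2 : 0 < z - lowT := by rw [hlowT]; linarith
      have hz3 : z - lowT < ST.γ m := by
        have : ST.χ m = ST.σ (m+1) + ST.γ m := by
          show ST.σ m - ST.σ (m+1) = ST.σ (m+1) + (ST.σ m - 2 * ST.σ (m+1)); ring
        rw [hlowT]
        rw [this] at hhi
        linarith
      have hx1 : lowFv < x := by
        rw [hxdef]
        have : 0 < (z - lowT) * (SF.γ m / ST.γ m) := by positivity
        linarith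
      have hx2 : x < SF.highPt w m := by
        have hgap : SF.highPt w m - SF.lowPt w m = SF.γ m := SF.highPt_sub_lowPt w m
        rw [hxdef, hlowF]
        have h1 : (z - lowT) * (SF.γ m / ST.γ m) < ST.γ m * (SF.γ m / ST.γ m) := by
          apply mul_lt_mul_of_pos_right hz3
          positivity
        have h2 : ST.γ m * (SF.γ m / ST.γ m) = SF.γ m := by field_simp
        linarith
      have hx1' : SF.lowPt w m < x := hx1
      -- greedy data for x
      obtain ⟨hdmx, htailx, hψx⟩ := SF.greedy_follow_full hx1' hx2
      obtain ⟨hdigx, hgbx⟩ := SF.greedy_follow hx1' hx2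
      refine ⟨x, ?_⟩
      have hx0 : 0 < x := by
        have h1 : 0 ≤ SF.base w m := SF.base_nonneg w m
        have h2 := SF.pos (m+1)
        have : 0 < SF.lowPt w m := by unfold Sys.lowPt; linarith
        linarith
      have hxlt1 : x < 1 := by
        have hb := SF.base_le w m
        rw [SF.σ0] at hb
        have h4 := SF.pos (m+1)
        have : SF.highPt w m ≤ 1 := by
          unfold Sys.highPt
          have : SF.χ m = SF.σ m - SF.σ (m+1) := rfl
          linarith
        linarith
      unfold ff
      rw [if_neg (by push_neg; exact ⟨hx0, hxlt1⟩)]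
      unfold fb
      rw [lastF_eq hdmx htailx, hψx]
      have hbaseTx : ST.base (SF.gd x) m = ST.base w m := ST.base_congr m hdigx
      have hψTx : ST.ψ (SF.gd x) = lowT := by
        rw [ST.ψ_pattern hdmx htailx, hbaseTx, hlowT, ST.gb_eq_base z m]
      rw [hψTx]
      have hxl : x - SF.lowPt w m = (z - lowT) * (SF.γ m / ST.γ m) := by
        rw [hxdef]; ring
      rw [hxl]
      have hcalc : (z - lowT) * (SF.γ m / ST.γ m) * ratioTF m = z - lowT := by
        unfold ratioTF
        field_simp
      rw [hcalc]; ring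

/-! ### the 1-dimensional homeomorphism -/

def fIso : ℝ ≃o ℝ := StrictMono.orderIsoOfSurjective ff strictMono_ff surjective_ff

def fHomeo : ℝ ≃ₜ ℝ := fIso.toHomeomorph

lemma fHomeo_apply (x : ℝ) : fHomeo x = ff x := rfl

/-! ### eventually-alternating digit sequences -/

def EA : Set (ℕ → Bool) := {d | ∃ N, ∀ k, N ≤ k → d (k+1) = !(d k)}

lemma EA_det {N : ℕ} {d d' : ℕ → Bool} (hd : ∀ k, N ≤ k → d (k+1) = !(d k))
    (hd' : ∀ k, N ≤ k → d' (k+1) = !(d' k)) (hagree : ∀ j, j ≤ N → d j = d' j) :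
    d = d' := by
  funext k
  induction k with
  | zero => exact hagree 0 (Nat.zero_le N)
  | succ l ih =>
    by_cases hl : l + 1 ≤ N
    · exact hagree (l+1) hl
    · have hlN : N ≤ l := by omega
      rw [hd l hlN, hd' l hlN, ih]

lemma EA_slice_finite (N : ℕ) : {d : ℕ → Bool | ∀ k, N ≤ k → d (k+1) = !(d k)}.Finite := by
  classical
  apply Set.Finite.of_finite_image (f := fun d => (fun j : Fin (N+1) => d j))
  · exact Set.toFinite _
  · intro d hd d' hd' h
    apply EA_det hd hd'
    intro j hj
    exact congrFun h ⟨j, by omega⟩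

lemma EA_countable : EA.Countable := by
  have : EA = ⋃ N, {d : ℕ → Bool | ∀ k, N ≤ k → d (k+1) = !(d k)} := by
    ext d
    simp only [EA, Set.mem_setOf_eq, Set.mem_iUnion]
  rw [this]
  exact Set.countable_iUnion (fun N => (EA_slice_finite N).countable)

def altTail (ph : Bool) (l : ℕ) : Bool := if l % 2 = 0 then ph else !ph

lemma altTail_succ (ph : Bool) (l : ℕ) : altTail ph (l+1) = !(altTail ph l) := by
  unfold altTail
  rcases Nat.even_or_odd l with h | h
  · have h1 : l % 2 = 0 := Nat.even_iff.mp h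
    have h2 : (l+1) % 2 = 1 := by omega
    simp [h1, h2]
  · have h1 : l % 2 = 1 := Nat.odd_iff.mp h
    have h2 : (l+1) % 2 = 0 := by omega
    simp [h1, h2]

def altFrom (w : ℕ → Bool) (n : ℕ) (ph : Bool) : ℕ → Bool :=
  fun k => if k < n then w k else altTail ph (k - n)

lemma altFrom_mem_EA (w : ℕ → Bool) (n : ℕ) (ph : Bool) : altFrom w n ph ∈ EA := by
  refine ⟨n, fun k hk => ?_⟩
  unfold altFrom
  rw [if_neg (by omega), if_neg (by omega)]
  have : k + 1 - n = (k - n) + 1 := by omega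
  rw [this, altTail_succ]

lemma altFrom_agree (w : ℕ → Bool) (n : ℕ) (ph : Bool) : ∀ k < n, altFrom w n ph k = w k := by
  intro k hk
  unfold altFrom
  rw [if_pos hk]

lemma altFrom_at (w : ℕ → Bool) (n : ℕ) (ph : Bool) : altFrom w n ph n = ph := by
  unfold altFrom
  rw [if_neg (by omega)]
  simp [altTail]

/-- in an EA sequence, beyond any point there is a `false` and a `true` digit,
    within two steps of the alternation bound -/
lemma EA_digits {d : ℕ → Bool} {N : ℕ} (hd : ∀ k, N ≤ k → d (k+1) = !(d k)) (n : ℕ) :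
    ∃ jf jt, n + 1 ≤ jf ∧ jf ≤ max n N + 2 ∧ d jf = false ∧
             n + 1 ≤ jt ∧ jt ≤ max n N + 2 ∧ d jt = true := by
  set M := max n N with hM
  have hMN : N ≤ M := le_max_right n N
  have hMn : n ≤ M := le_max_left n N
  have halt : d (M+2) = !(d (M+1)) := hd (M+1) (by omega)
  cases h1 : d (M+1)
  · refine ⟨M+1, M+2, by omega, by omega, h1, by omega, by omega, ?_⟩
    rw [halt, h1]; rfl
  · refine ⟨M+2, M+1, by omega, by omega, ?_, by omega, by omega, h1⟩
    rw [halt, h1]; rfl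

/-! ### the two countable 1-d sets -/

def DF : Set ℝ := SF.ψ '' EA
def DT : Set ℝ := ST.ψ '' EA

lemma DF_countable : DF.Countable := EA_countable.image _
lemma DT_countable : DT.Countable := EA_countable.image _

lemma ff_image_DF : ff '' DF = DT := by
  ext z
  constructor
  · rintro ⟨x, ⟨d, hd, rfl⟩, rfl⟩
    exact ⟨d, hd, (fψ d).symm⟩
  · rintro ⟨d, hd, rfl⟩
    exact ⟨SF.ψ d, ⟨d, hd, rfl⟩, fψ d⟩

namespace Sys

variable (S : Sys)

lemma ψ_le_dropped (e : ℕ → Bool) {n j : ℕ} (hnj : n ≤ j) (hj : e j = false) :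
    S.ψ e ≤ S.base e n + S.σ n - S.χ j := by
  have h1 : S.ψ e ≤ S.base e (j+1) + S.σ (j+1) := S.ψ_le_partial_add e (j+1)
  have h2 : S.base e (j+1) = S.base e n + ∑ k ∈ Finset.Ico n (j+1), S.term e k :=
    S.base_split e (by omega)
  have h3 : ∑ k ∈ Finset.Ico n (j+1), S.term e k = ∑ k ∈ Finset.Ico n j, S.term e k := by
    rw [Finset.sum_Ico_succ_top hnj]
    have : S.term e j = 0 := by unfold term; rw [hj]; simp
    rw [this, add_zero]
  have h4 : ∑ k ∈ Finset.Ico n j, S.term e k ≤ S.σ n - S.σ j := S.sum_Ico_term_le e hnj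
  have h5 : S.χ j = S.σ j - S.σ (j+1) := rfl
  linarith

lemma ψ_ge_added (e : ℕ → Bool) {n j : ℕ} (hnj : n ≤ j) (hj : e j = true) :
    S.base e n + S.χ j ≤ S.ψ e := by
  have h1 : S.base e (j+1) ≤ S.ψ e := S.partial_le_ψ e (j+1)
  have h2 : S.base e (j+1) = S.base e n + ∑ k ∈ Finset.Ico n (j+1), S.term e k :=
    S.base_split e (by omega)
  have h3 : S.χ j ≤ ∑ k ∈ Finset.Ico n (j+1), S.term e k := by
    have hmem : j ∈ Finset.Ico n (j+1) := Finset.mem_Ico.mpr ⟨hnj, by omega⟩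
    have := Finset.single_le_sum (f := S.term e) (fun k _ => S.term_nonneg e k) hmem
    have ht : S.term e j = S.χ j := by unfold term; rw [hj]; simp
    rw [ht] at this
    exact this
  linarith

lemma σ_succ_le_χ (n : ℕ) : S.σ (n+1) ≤ S.χ n := le_of_lt (S.σ_succ_lt_χ n)

end Sys

/-! ### the deepness lemma for the fat system -/

set_option maxHeartbeats 1000000 in
lemma deep1 {d : ℕ → Bool} {N : ℕ} (hd : ∀ k, N ≤ k → d (k+1) = !(d k))
    {ε : ℝ} (hε : 0 < ε) :
    ∃ ρ > 0, ∀ u : ℝ, |u - SF.ψ d| ≤ ρ →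
      ∃ p ∈ Set.range SF.ψ, |u - p| ≤ ε * |u - SF.ψ d| := by
  classical
  set q := SF.ψ d with hq
  -- q is strictly inside (0,1)
  obtain ⟨jf, jt, hjf1, hjf2, hjf3, hjt1, hjt2, hjt3⟩ := EA_digits hd 0
  have hq0 : 0 < q := SF.ψ_pos_of_true hjt3
  have hq1 : q < 1 := SF.ψ_lt_one_of_false hjf3
  -- choose M₀ with 16 * (1/8)^(M₀+1) ≤ ε
  obtain ⟨M₀, hM₀⟩ : ∃ n : ℕ, (1/8:ℝ)^n < ε/16 :=
    exists_pow_lt_of_lt_one (by positivity) (by norm_num)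
  have hM₀' : 16 * (1/8:ℝ)^(M₀+1) ≤ ε := by
    have h1 : (1/8:ℝ)^(M₀+1) ≤ (1/8:ℝ)^M₀ := by
      apply pow_le_pow_of_le_one (by norm_num) (by norm_num) (by omega)
    nlinarith
  set M := max N M₀ with hM
  set ρ := min (SF.σ (M+3)/2) (min (q/2) ((1-q)/2)) with hρ
  have hρpos : 0 < ρ := by
    have := SF.pos (M+3)
    apply lt_min (by linarith)
    apply lt_min (by linarith) (by linarith)
  refine ⟨ρ, hρpos, ?_⟩
  intro u hu
  have hrhs : 0 ≤ |u - q| := abs_nonneg _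
  by_cases hur : u ∈ Set.range SF.ψ
  · exact ⟨u, hur, by simpa using mul_nonneg (le_of_lt hε) hrhs⟩
  -- u is in (0,1) and not in the Cantor set
  have hu0 : 0 < u := by
    have h1 : q - u ≤ |u - q| := by rw [abs_sub_comm]; exact le_abs_self _
    have h2 : ρ ≤ q/2 := le_trans (min_le_right _ _) (min_le_left _ _)
    linarith
  have hu1 : u < 1 := by
    have h1 : u - q ≤ |u - q| := le_abs_self _
    have h2 : ρ ≤ (1-q)/2 := le_trans (min_le_right _ _) (min_le_right _ _)
    linarith
  rcases SF.dichotomy hu0 hu1 with h | ⟨m, hdm, htail, hlo, hhi, hval⟩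
  · exact absurd ⟨SF.gd u, h.symm⟩ hur
  -- gap data
  set w := SF.gd u with hw
  set B := SF.gb u m with hB
  -- the key lower bound on |u - q|
  have hBbase : B = SF.base w m := SF.gb_eq_base u m
  have key : SF.σ (max m N + 3) ≤ |u - q| := by
    by_cases hagree : ∀ k < m, d k = w k
    · -- q in the same cylinder: use alternation of d
      obtain ⟨kf, kt, hkf1, hkf2, hkf3, hkt1, hkt2, hkt3⟩ := EA_digits hd m
      have hBd : SF.base d m = SF.base w m := SF.base_congr m hagree
      cases hdmq : d m
      · -- d m = false : q ≤ low - χ kf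
        have h1 : q ≤ SF.base d (m+1) + SF.σ (m+1) - SF.χ kf :=
          SF.ψ_le_dropped d (by omega) hkf3
        have h2 : SF.base d (m+1) = SF.base d m := by
          rw [SF.base_split d (Nat.le_succ m), Finset.sum_eq_sum_Ico_succ_bot (Nat.lt_succ_self m)]
          have : SF.term d m = 0 := by unfold Sys.term; rw [hdmq]; simp
          simp [this]
        have h3 : SF.χ kf ≥ SF.χ (max m N + 2) := SF.χ_anti (by omega)
        have h4 : SF.χ (max m N + 2) ≥ SF.σ (max m N + 3) := SF.σ_succ_le_χ _
        -- u > low = B + σ (m+1) ≥ q + χ kf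
        have h5 : q ≤ B + SF.σ (m+1) - SF.χ kf := by
          rw [hBbase, ← hBd, ← h2]
          exact h1
        have h6 : u - q ≥ SF.χ kf := by linarith
        have : u - q ≤ |u - q| := le_abs_self _
        linarith
      · -- d m = true : q ≥ high + χ kt
        have h1 : SF.base d (m+1) + SF.χ kt ≤ q := SF.ψ_ge_added d (by omega) hkt3
        have h2 : SF.base d (m+1) = SF.base d m + SF.χ m := by
          rw [SF.base_split d (Nat.le_succ m), Finset.sum_eq_sum_Ico_succ_bot (Nat.lt_succ_self m)]
          have : SF.term d m = SF.χ m := by unfold Sys.term; rw [hdmq]; simp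
          simp [this]
        have h3 : SF.χ kt ≥ SF.χ (max m N + 2) := SF.χ_anti (by omega)
        have h4 : SF.χ (max m N + 2) ≥ SF.σ (max m N + 3) := SF.σ_succ_le_χ _
        have h5 : B + SF.χ m + SF.χ kt ≤ q := by
          rw [hBbase, ← hBd]
          linarith [h1, h2]
        have h6 : q - u ≥ SF.χ kt := by linarith
        have : q - u ≤ |u - q| := by rw [abs_sub_comm]; exact le_abs_self _
        linarith
    · -- q in a different cylinder
      push_neg at hagree
      have hex : ∃ j, j < m ∧ d j ≠ w j := hagree
      set j := Nat.find hex with hj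
      obtain ⟨hjm, hjne⟩ := Nat.find_spec hex
      have hagr : ∀ k < j, d k = w k := by
        intro k hk
        by_contra hc
        exact Nat.find_min hex hk ⟨lt_trans hk hjm, hc⟩
      have hpre : SF.base d j = SF.base w j := SF.base_congr j hagr
      have hmax : SF.σ (m+1) ≥ SF.σ (max m N + 3) := SF.σ_anti.antitone (by omega)
      cases hdj : d j
      · -- d j = false, w j = true : q ≤ pre + σ (j+1), low ≥ pre + χ j + σ (m+1)
        have hwj : w j = true := by
          cases hwjc : w j
          · exact absurd (hdj.trans hwjc.symm) hjne
          · rfl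
        have h1 : q ≤ SF.base w j + SF.σ (j+1) := by
          rw [← hpre]; exact SF.ψ_le_of_false (fun _ _ => rfl) hdj
        have h2 : SF.base w j + SF.χ j ≤ SF.base w m := by
          rw [SF.base_split w (le_of_lt hjm), Finset.sum_eq_sum_Ico_succ_bot hjm]
          have ht : SF.term w j = SF.χ j := by unfold Sys.term; rw [hwj]; simp
          rw [ht]
          have : 0 ≤ ∑ k ∈ Finset.Ico (j+1) m, SF.term w k :=
            Finset.sum_nonneg (fun k _ => SF.term_nonneg w k)
          linarith
        have h3 := SF.σ_succ_le_χ j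
        -- u > low = base w m + σ(m+1) ≥ q + σ(m+1) + (χ j - σ (j+1)) ≥ q + σ (m+1)
        have h4 : u - q ≥ SF.σ (m+1) := by
          rw [hBbase] at hlo
          linarith
        have : u - q ≤ |u - q| := le_abs_self _
        linarith
      · -- d j = true, w j = false : q ≥ pre + χ j, high ≤ pre + σ (j+1) - σ (m+1)
        have hwj : w j = false := by
          cases hwjc : w j
          · rfl
          · exact absurd (hdj.trans hwjc.symm) hjne
        have h1 : SF.base w j + SF.χ j ≤ q := by
          exact SF.ψ_ge_of_true hagr hdj
        have h2 : SF.base w m ≤ SF.base w j + (SF.σ (j+1) - SF.σ m) := by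
          rw [SF.base_split w (le_of_lt hjm), Finset.sum_eq_sum_Ico_succ_bot hjm]
          have ht : SF.term w j = 0 := by unfold Sys.term; rw [hwj]; simp
          rw [ht, zero_add]
          have := SF.sum_Ico_term_le w hjm
          linarith [SF.sum_Ico_term_le w (le_of_lt hjm)]
        have h3 := SF.σ_succ_le_χ j
        have hχm : SF.χ m = SF.σ m - SF.σ (m+1) := rfl
        have h4 : q - u ≥ SF.σ (m+1) := by
          rw [hBbase] at hhi
          linarith
        have : q - u ≤ |u - q| := by rw [abs_sub_comm]; exact le_abs_self _
        linarith
  -- conclude m > M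
  have hmM : M < m := by
    by_contra hc
    push_neg at hc
    have h1 : max m N + 3 ≤ M + 3 := by omega
    have h2 : SF.σ (M+3) ≤ SF.σ (max m N + 3) := SF.σ_anti.antitone h1
    have h3 : ρ ≤ SF.σ (M+3)/2 := min_le_left _ _
    have h4 := SF.pos (M+3)
    linarith
  have hmaxm : max m N = m := by omega
  rw [hmaxm] at key
  -- the point p
  refine ⟨B + SF.σ (m+1), ⟨SF.gd u, by rw [← hval]⟩, ?_⟩
  have hle1 : |u - (B + SF.σ (m+1))| = u - (B + SF.σ (m+1)) := by
    rw [abs_of_pos]; linarith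
  have hγ : u - (B + SF.σ (m+1)) ≤ SF.γ m := by
    have : SF.χ m = SF.σ (m+1) + SF.γ m := by unfold Sys.χ Sys.γ; ring
    linarith [hhi, this]
  have hγval : SF.γ m = σF m * (1/8:ℝ)^(m+1) := γF_eq m
  have hσ3 : σF m ≤ 16 * SF.σ (m+3) := by
    have := σF_three m
    show σF m ≤ 16 * σF (m+3)
    linarith
  have hpow : (1/8:ℝ)^(m+1) ≤ (1/8:ℝ)^(M₀+1) := by
    apply pow_le_pow_of_le_one (by norm_num) (by norm_num)
    omega
  have hpowpos : (0:ℝ) < (1/8:ℝ)^(m+1) := by positivity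
  have hσpos : (0:ℝ) < SF.σ (m+3) := SF.pos (m+3)
  calc |u - (B + SF.σ (m+1))| = u - (B + SF.σ (m+1)) := hle1
    _ ≤ SF.γ m := hγ
    _ = σF m * (1/8:ℝ)^(m+1) := hγval
    _ ≤ 16 * SF.σ (m+3) * (1/8:ℝ)^(m+1) := by nlinarith
    _ ≤ 16 * (1/8:ℝ)^(M₀+1) * SF.σ (m+3) := by nlinarith
    _ ≤ ε * SF.σ (m+3) := by nlinarith
    _ ≤ ε * |u - q| := by nlinarith

/-! ### Euclidean helpers -/

section Euclid

variable {m : ℕ}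

def toEuc (g : Fin m → ℝ) : EuclideanSpace ℝ (Fin m) := (WithLp.equiv 2 (Fin m → ℝ)).symm g

@[simp] lemma toEuc_apply (g : Fin m → ℝ) (i : Fin m) : toEuc g i = g i := rfl

lemma coord_le_norm (z : EuclideanSpace ℝ (Fin m)) (i : Fin m) : |z i| ≤ ‖z‖ := by
  rw [EuclideanSpace.norm_eq]
  have h1 : |z i| = Real.sqrt (‖z i‖^2) := by
    rw [Real.sqrt_sq_eq_abs]; simp
  rw [h1]
  apply Real.sqrt_le_sqrt
  exact Finset.single_le_sum (f := fun j => ‖z j‖^2) (fun j _ => by positivity) (Finset.mem_univ i)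

lemma norm_le_of_coord {z : EuclideanSpace ℝ (Fin m)} {a : ℝ} (ha : 0 ≤ a)
    (h : ∀ i, |z i| ≤ a) : ‖z‖ ≤ (m+1) * a := by
  rw [EuclideanSpace.norm_eq]
  have h1 : ∑ i, ‖z i‖^2 ≤ ∑ _i : Fin m, a^2 := by
    apply Finset.sum_le_sum
    intro i _
    have := h i
    rw [Real.norm_eq_abs]
    nlinarith [abs_nonneg (z i)]
  have h2 : ∑ _i : Fin m, a^2 = m * a^2 := by
    rw [Finset.sum_const, Finset.card_univ, Fintype.card_fin]
    simp [nsmul_eq_mul]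
  have h3 : Real.sqrt (∑ i, ‖z i‖^2) ≤ Real.sqrt (((m+1) * a)^2) := by
    apply Real.sqrt_le_sqrt
    have hmn : (m:ℝ) ≥ 0 := Nat.cast_nonneg m
    nlinarith [h1, h2, sq_nonneg a]
  rwa [Real.sqrt_sq (by positivity)] at h3

lemma norm_le_mul_of_coord {z y : EuclideanSpace ℝ (Fin m)} {c : ℝ} (hc : 0 ≤ c)
    (h : ∀ i, |z i| ≤ c * |y i|) : ‖z‖ ≤ c * ‖y‖ := by
  rw [EuclideanSpace.norm_eq, EuclideanSpace.norm_eq]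
  have h1 : ∑ i, ‖z i‖^2 ≤ c^2 * ∑ i, ‖y i‖^2 := by
    rw [Finset.mul_sum]
    apply Finset.sum_le_sum
    intro i _
    have := h i
    rw [Real.norm_eq_abs, Real.norm_eq_abs]
    nlinarith [abs_nonneg (z i), abs_nonneg (y i), mul_nonneg hc (abs_nonneg (y i))]
  calc Real.sqrt (∑ i, ‖z i‖^2) ≤ Real.sqrt (c^2 * ∑ i, ‖y i‖^2) := Real.sqrt_le_sqrt h1
    _ = c * Real.sqrt (∑ i, ‖y i‖^2) := by
        rw [Real.sqrt_mul (by positivity), Real.sqrt_sq hc]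

end Euclid

/-! ### the m-dimensional sets -/

lemma continuous_ψ (S : Sys) : Continuous S.ψ := by
  apply continuous_tsum (u := S.χ)
  · intro k
    have heq : (fun d : ℕ → Bool => S.term d k) =
        (fun b : Bool => if b then S.χ k else 0) ∘ (fun d : ℕ → Bool => d k) := rfl
    rw [heq]
    exact Continuous.comp continuous_of_discreteTopology (continuous_apply k)
  · exact S.summable_χ
  · intro k d
    rw [Real.norm_eq_abs, abs_of_nonneg (S.term_nonneg d k)]
    exact S.term_le_χ d k

lemma isCompact_PF : IsCompact (Set.range SF.ψ) := isCompact_range (continuous_ψ SF)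

lemma isClosed_PF : IsClosed (Set.range SF.ψ) := isCompact_PF.isClosed

variable (m : ℕ)

def Pm : Set (EuclideanSpace ℝ (Fin m)) := {x | ∀ i, x i ∈ Set.range SF.ψ}
def Am : Set (EuclideanSpace ℝ (Fin m)) := {x | ∀ i, x i ∈ DF}
def Bm : Set (EuclideanSpace ℝ (Fin m)) := {x | ∀ i, x i ∈ DT}

lemma continuous_coord (i : Fin m) : Continuous (fun x : EuclideanSpace ℝ (Fin m) => x i) :=
  (continuous_apply i).comp (PiLp.continuous_ofLp 2 (fun _ : Fin m => ℝ))

lemma Am_subset_Pm : Am m ⊆ Pm m := by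
  intro x hx i
  obtain ⟨d, _, hd⟩ := hx i
  exact ⟨d, hd⟩

lemma isClosed_Pm : IsClosed (Pm m) := by
  have : Pm m = ⋂ i, (fun x : EuclideanSpace ℝ (Fin m) => x i) ⁻¹' (Set.range SF.ψ) := by
    ext x; simp [Pm, Set.mem_iInter]
  rw [this]
  exact isClosed_iInter (fun i => isClosed_PF.preimage (continuous_coord m i))

lemma countable_Am : (Am m).Countable := by
  have h1 : {g : Fin m → ℝ | ∀ i, g i ∈ DF}.Countable :=
    Set.countable_pi (fun _ => DF_countable)
  have h2 : Am m = (WithLp.equiv 2 (Fin m → ℝ)) ⁻¹' {g : Fin m → ℝ | ∀ i, g i ∈ DF} := rfl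
  rw [h2]
  exact h1.preimage (Equiv.injective _)

lemma cylinder_dist (S : Sys) {d e : ℕ → Bool} (n : ℕ) (h : ∀ k < n, d k = e k) :
    |S.ψ d - S.ψ e| ≤ S.σ n := by
  have h1 := S.partial_le_ψ d n
  have h2 := S.ψ_le_partial_add d n
  have h3 := S.partial_le_ψ e n
  have h4 := S.ψ_le_partial_add e n
  have h5 : S.base d n = S.base e n := S.base_congr n h
  unfold Sys.base at h5
  rw [abs_le]
  constructor <;> [skip; skip] <;> nlinarith [h5]

/-- density of `Am` in `Pm`, with avoidance of a given point when `m ≥ 1`. -/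
lemma Am_dense (hm : 1 ≤ m) (p : EuclideanSpace ℝ (Fin m)) (hp : p ∈ Pm m)
    {δ : ℝ} (hδ : 0 < δ) (zavoid : EuclideanSpace ℝ (Fin m)) :
    ∃ a ∈ Am m, ‖p - a‖ < δ ∧ a ≠ zavoid := by
  classical
  -- choose digit expansions
  have hdig : ∀ i, ∃ d, SF.ψ d = p i := fun i => hp i
  choose dg hdg using hdig
  -- choose n with (m+1) * σF n < δ
  have : Tendsto (fun n => ((m:ℝ)+1) * SF.σ n) atTop (𝓝 0) := by
    simpa using SF.σ_tendsto.const_mul ((m:ℝ)+1)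
  obtain ⟨n, hn⟩ := (this.eventually (gt_mem_nhds hδ)).exists
  -- two candidates with phases
  set a0 := toEuc (fun i => SF.ψ (altFrom (dg i) n false)) with ha0
  set a1 := toEuc (fun i => SF.ψ (altFrom (dg i) n true)) with ha1
  have hmem : ∀ ph : Bool, toEuc (fun i => SF.ψ (altFrom (dg i) n ph)) ∈ Am m := by
    intro ph i
    exact ⟨altFrom (dg i) n ph, altFrom_mem_EA _ _ _, rfl⟩
  have hclose : ∀ ph : Bool, ‖p - toEuc (fun i => SF.ψ (altFrom (dg i) n ph))‖ < δ := by
    intro ph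
    have hcoord : ∀ i, |(p - toEuc (fun i => SF.ψ (altFrom (dg i) n ph))) i| ≤ SF.σ n := by
      intro i
      have : (p - toEuc (fun i => SF.ψ (altFrom (dg i) n ph))) i
          = p i - SF.ψ (altFrom (dg i) n ph) := by simp
      rw [this, ← hdg i]
      exact cylinder_dist SF n (fun k hk => (altFrom_agree (dg i) n ph k hk).symm)
    have := norm_le_of_coord (le_of_lt (SF.pos n)) hcoord
    linarith
  have hne : a0 ≠ a1 := by
    intro hc
    have i0 : Fin m := ⟨0, hm⟩
    have h1 : SF.ψ (altFrom (dg i0) n false) = SF.ψ (altFrom (dg i0) n true) := by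
      have := congrArg (fun z : EuclideanSpace ℝ (Fin m) => z i0) hc
      exact this
    have h2 := SF.ψ_injective h1
    have h3 := congrFun h2 n
    rw [altFrom_at, altFrom_at] at h3
    exact Bool.noConfusion h3
  by_cases hz : a0 = zavoid
  · exact ⟨a1, hmem true, hclose true, by rw [← hz]; exact fun hc => hne hc.symm⟩
  · exact ⟨a0, hmem false, hclose false, hz⟩

/-- the m-dimensional deepness lemma -/
lemma deepm (a : EuclideanSpace ℝ (Fin m)) (ha : a ∈ Am m) {ε : ℝ} (hε : 0 < ε) :
    ∃ ρ > 0, ∀ v : EuclideanSpace ℝ (Fin m), ‖v - a‖ ≤ ρ →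
      ∃ p ∈ Pm m, ‖v - p‖ ≤ ε * ‖v - a‖ := by
  classical
  have hdig : ∀ i, ∃ d, d ∈ EA ∧ SF.ψ d = a i := fun i => ha i
  choose dg hdgEA hdg using hdig
  have hdeep : ∀ i : Fin m, ∃ ρ > 0, ∀ u : ℝ, |u - SF.ψ (dg i)| ≤ ρ →
      ∃ p ∈ Set.range SF.ψ, |u - p| ≤ ε * |u - SF.ψ (dg i)| := by
    intro i
    obtain ⟨N, hN⟩ := hdgEA i
    exact deep1 hN hε
  choose ρi hρipos hρi using hdeep
  rcases Nat.eq_zero_or_pos m with hm0 | hmpos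
  · refine ⟨1, one_pos, fun v _ => ⟨v, ?_, ?_⟩⟩
    · intro i; exact absurd i.2 (by omega)
    · simp
      positivity
  · have hne : (Finset.univ : Finset (Fin m)).Nonempty := by
      refine ⟨⟨0, hmpos⟩, Finset.mem_univ _⟩
    set ρ := Finset.univ.inf' hne ρi with hρ
    have hρpos : 0 < ρ := by
      rw [hρ, Finset.lt_inf'_iff]
      exact fun i _ => hρipos i
    refine ⟨ρ, hρpos, fun v hv => ?_⟩
    have hco : ∀ i, |v i - a i| ≤ ρi i := by
      intro i
      have h1 : |(v - a) i| ≤ ‖v - a‖ := coord_le_norm _ i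
      have h2 : (v - a) i = v i - a i := by simp
      have h3 : ρ ≤ ρi i := Finset.inf'_le _ (Finset.mem_univ i)
      rw [h2] at h1
      linarith
    have hpt : ∀ i, ∃ p ∈ Set.range SF.ψ, |v i - p| ≤ ε * |v i - a i| := by
      intro i
      have := hρi i (v i) (by rw [hdg i]; exact hco i)
      rwa [hdg i] at this
    choose pt hptP hpt using hpt
    refine ⟨toEuc pt, fun i => hptP i, ?_⟩
    apply norm_le_mul_of_coord (le_of_lt hε)
    intro i
    have h2 : (v - toEuc pt) i = v i - pt i := by simp [toEuc]
    have h3 : (v - a) i = v i - a i := by simp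
    rw [h2, h3]
    exact hpt i

/-! ### `Am` is not a conical limit set -/

theorem not_conical_Am (m : ℕ) (hm : 1 ≤ m) : ¬ IsConicalLimitSet (Am m) := by
  classical
  rintro ⟨E, hE, hΛ⟩
  -- base point
  set q0 : EuclideanSpace ℝ (Fin m) := toEuc (fun _ => SF.ψ (altFrom (fun _ => false) 0 false))
    with hq0def
  have hq0A : q0 ∈ Am m := fun i => ⟨altFrom (fun _ => false) 0 false, altFrom_mem_EA _ _ _, rfl⟩
  have hq0P : q0 ∈ Pm m := Am_subset_Pm m hq0A
  haveI : Nonempty ↥(Pm m) := ⟨⟨q0, hq0P⟩⟩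
  haveI : CompleteSpace ↥(Pm m) := (isClosed_Pm m).completeSpace_coe
  -- the open sets
  set O : ℕ → Set (EuclideanSpace ℝ (Fin m)) := fun n =>
    ⋃ e ∈ {e : ℝ × EuclideanSpace ℝ (Fin m) | e ∈ E ∧ e.1 < 1/(n+1)},
      Metric.ball e.2 (2 * e.1) with hO
  have hOopen : ∀ n, IsOpen (O n) := by
    intro n
    exact isOpen_biUnion (fun e _ => Metric.isOpen_ball)
  -- density of O n near Pm
  have hOdense : ∀ n : ℕ, ∀ z ∈ Pm m, ∀ r > 0, ∃ p ∈ Pm m, p ∈ O n ∧ dist p z < r := by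
    intro n z hz r hr
    obtain ⟨a, haA, haz, -⟩ := Am_dense m hm z hz (show (0:ℝ) < r/4 by linarith) z
    -- a is a conical limit point
    have haconical : a ∈ conicalLimitSet E := by rw [hΛ]; exact haA
    obtain ⟨C, hC, wit, hwitE, hwt1, hwt2, hwt3⟩ := haconical
    obtain ⟨ρ, hρpos, hdeep⟩ := deepm m a haA (show (0:ℝ) < 1/(2*(C+1)) by positivity)
    -- choose a witness with small scale
    have hsmall : ∀ᶠ j in atTop, (wit j).1 < min (1/((n:ℝ)+1)) (min (ρ/(C+1)) (r/(8*(C+1)))) := by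
      apply hwt1.eventually (gt_mem_nhds _)
      have h1 : (0:ℝ) < 1/((n:ℝ)+1) := by positivity
      have h2 : (0:ℝ) < ρ/(C+1) := by positivity
      have h3 : (0:ℝ) < r/(8*(C+1)) := by positivity
      exact lt_min h1 (lt_min h2 h3)
    obtain ⟨j, hj⟩ := hsmall.exists
    set t := (wit j).1 with ht
    set v := (wit j).2 with hv
    have htpos : 0 < t := hE (hwitE j)
    have ht1 : t < 1/((n:ℝ)+1) := lt_of_lt_of_le hj (min_le_left _ _)
    have ht2 : t ≤ ρ/(C+1) := le_of_lt (lt_of_lt_of_le hj (le_trans (min_le_right _ _) (min_le_left _ _)))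
    have ht3 : t ≤ r/(8*(C+1)) := le_of_lt (lt_of_lt_of_le hj (le_trans (min_le_right _ _) (min_le_right _ _)))
    have hva : ‖v - a‖ ≤ C * t := hwt3 j
    have hvaρ : ‖v - a‖ ≤ ρ := by
      have : C * t ≤ C * (ρ/(C+1)) := by
        apply mul_le_mul_of_nonneg_left ht2 (le_of_lt hC)
      have h2 : C * (ρ/(C+1)) ≤ ρ := by
        rw [div_eq_mul_inv]
        rw [show C * (ρ * (C+1)⁻¹) = ρ * (C * (C+1)⁻¹) by ring]
        have : C * (C+1)⁻¹ ≤ 1 := by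
          rw [mul_inv_le_iff₀ (by linarith)]
          linarith
        nlinarith [hρpos]
      linarith
    obtain ⟨p, hpP, hpv⟩ := hdeep v hvaρ
    have hpv2 : ‖v - p‖ ≤ t/2 := by
      have h1 : (1/(2*(C+1))) * ‖v - a‖ ≤ (1/(2*(C+1))) * (C * t) := by
        apply mul_le_mul_of_nonneg_left hva (by positivity)
      have h2 : (1/(2*(C+1))) * (C * t) ≤ t/2 := by
        rw [div_mul_eq_mul_div, one_mul]
        rw [div_le_div_iff₀ (by positivity) (by norm_num)]
        nlinarith [le_of_lt htpos]
      linarith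
    refine ⟨p, hpP, ?_, ?_⟩
    · rw [hO]
      apply Set.mem_biUnion (show wit j ∈ {e : ℝ × EuclideanSpace ℝ (Fin m) | e ∈ E ∧ e.1 < 1/(n+1)} from ⟨hwitE j, ht1⟩)
      rw [Metric.mem_ball, dist_eq_norm, ← hv, ← ht]
      have : ‖p - v‖ = ‖v - p‖ := norm_sub_rev p v
      rw [this]
      linarith
    · have hd1 : dist p v ≤ t/2 := by rw [dist_eq_norm, norm_sub_rev]; exact hpv2
      have hd2 : dist v a ≤ C * t := by rw [dist_eq_norm]; exact hva
      have hd3 : dist a z < r/4 := by rw [dist_comm, dist_eq_norm]; exact haz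
      have hchain : dist p z ≤ dist p v + dist v a + dist a z := dist_triangle4 p v a z
      have hct : C * t + t/2 ≤ r/4 := by
        have h1 : (C+1) * t ≤ (C+1) * (r/(8*(C+1))) := by
          apply mul_le_mul_of_nonneg_left ht3 (by linarith)
        have h2 : (C+1) * (r/(8*(C+1))) = r/8 := by
          field_simp
        nlinarith [htpos]
      linarith
  -- the Baire category argument on Pm
  obtain ⟨aEnum, haEnum⟩ := (countable_Am m).exists_eq_range ⟨q0, hq0A⟩
  set F : ℕ ⊕ ℕ → Set ↥(Pm m) := fun j =>
    match j with
    | Sum.inl n => Subtype.val ⁻¹' O n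
    | Sum.inr k => {z : ↥(Pm m) | (z : EuclideanSpace ℝ (Fin m)) ≠ aEnum k} with hF
  have hFopen : ∀ j, IsOpen (F j) := by
    rintro (n | k)
    · exact (hOopen n).preimage continuous_subtype_val
    · have : F (Sum.inr k) = (Subtype.val ⁻¹' {aEnum k})ᶜ := by
        ext z; simp [hF]
      rw [this]
      exact (isClosed_singleton.preimage continuous_subtype_val).isOpen_compl
  have hFdense : ∀ j, Dense (F j) := by
    rintro (n | k) <;> rw [Metric.dense_iff] <;> intro z r hr
    · obtain ⟨p, hpP, hpO, hpz⟩ := hOdense n z z.2 r hr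
      refine ⟨⟨p, hpP⟩, ?_, hpO⟩
      rw [Metric.mem_ball, Subtype.dist_eq]
      exact hpz
    · obtain ⟨a, haA, haz, hane⟩ := Am_dense m hm z z.2 hr (aEnum k)
      refine ⟨⟨a, Am_subset_Pm m haA⟩, ?_, hane⟩
      rw [Metric.mem_ball, Subtype.dist_eq, dist_comm, dist_eq_norm]
      exact haz
  have hdense := dense_iInter_of_isOpen hFopen hFdense
  obtain ⟨xhat, hxhat⟩ := hdense.nonempty
  rw [Set.mem_iInter] at hxhat
  set x : EuclideanSpace ℝ (Fin m) := ↑xhat with hx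
  have hxO : ∀ n, x ∈ O n := fun n => hxhat (Sum.inl n)
  have hxA : x ∉ Am m := by
    intro hc
    rw [haEnum] at hc
    obtain ⟨k, hk⟩ := hc
    exact (hxhat (Sum.inr k)) hk.symm
  -- x is a conical limit point
  have hwit : ∀ n : ℕ, ∃ e : ℝ × EuclideanSpace ℝ (Fin m),
      e ∈ E ∧ e.1 < 1/(n+1) ∧ dist x e.2 < 2 * e.1 := by
    intro n
    have := hxO n
    rw [hO] at this
    obtain ⟨e, he, hball⟩ := Set.mem_iUnion₂.mp this
    exact ⟨e, he.1, he.2, Metric.mem_ball.mp hball⟩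
  choose wit hwE hwlt hwball using hwit
  have hxconical : x ∈ conicalLimitSet E := by
    refine ⟨2, by norm_num, wit, hwE, ?_, ?_, ?_⟩
    · apply tendsto_of_tendsto_of_tendsto_of_le_of_le (g := fun _ => (0:ℝ))
        (h := fun n : ℕ => 1/((n:ℝ)+1)) tendsto_const_nhds
        tendsto_one_div_add_atTop_nhds_zero_nat
      · intro n; exact le_of_lt (hE (hwE n))
      · intro n; exact le_of_lt (hwlt n)
    · rw [tendsto_iff_dist_tendsto_zero]
      apply squeeze_zero (fun n => dist_nonneg)
        (g := fun n : ℕ => 2/((n:ℝ)+1))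
      · intro n
        have h1 := hwball n
        have h2 := hwlt n
        rw [dist_comm]
        have h3 : 2 * (wit n).1 ≤ 2/((n:ℝ)+1) := by
          have h4 : 2/((n:ℝ)+1) = 2 * (1/((n:ℝ)+1)) := by ring
          rw [h4]; linarith
        linarith
      · have := tendsto_one_div_add_atTop_nhds_zero_nat.const_mul (2:ℝ)
        simpa [div_eq_mul_inv] using this
    · intro n
      have h1 := hwball n
      rw [dist_comm, dist_eq_norm] at h1
      linarith
  rw [hΛ] at hxconical
  exact hxA hxconical

/-! ### the conical limit set construction for `Bm` -/

lemma σT_val (n : ℕ) : ST.σ n = (1/3:ℝ)^n := rfl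

lemma γT_anti {n n' : ℕ} (h : n < n') : ST.γ n' < ST.γ n := by
  rw [γT_eq, γT_eq]
  apply pow_lt_pow_right_of_lt_one₀ (by norm_num) (by norm_num)
  omega

lemma γT_inj {n n' : ℕ} (h : ST.γ n = ST.γ n') : n = n' := by
  rcases lt_trichotomy n n' with hc | hc | hc
  · have := γT_anti hc; linarith
  · exact hc
  · have := γT_anti hc; linarith

/-- rigidity: a point lies in at most one gap of the thin system -/
lemma gap_rigid {w w' : ℕ → Bool} {n n' : ℕ} {x : ℝ}
    (h1 : x ∈ Set.Ioo (ST.lowPt w n) (ST.highPt w n))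
    (h2 : x ∈ Set.Ioo (ST.lowPt w' n') (ST.highPt w' n')) :
    ST.lowPt w n = ST.lowPt w' n' ∧ n = n' := by
  obtain ⟨h1a, h1b⟩ := h1
  obtain ⟨h2a, h2b⟩ := h2
  have hlow : ST.lowPt w n = ST.lowPt w' n' := by
    rcases lt_trichotomy (ST.lowPt w n) (ST.lowPt w' n') with hc | hc | hc
    · exfalso
      have hmem := ST.gap_lemma w n (Sys.lowEnd' w' n')
      rw [ST.ψ_lowEnd] at hmem
      rcases hmem with hx | hx
      · linarith
      · linarith
    · exact hc
    · exfalso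
      have hmem := ST.gap_lemma w' n' (Sys.lowEnd' w n)
      rw [ST.ψ_lowEnd] at hmem
      rcases hmem with hx | hx
      · linarith
      · linarith
  refine ⟨hlow, ?_⟩
  have hhigh : ST.highPt w n = ST.highPt w' n' := by
    rcases lt_trichotomy (ST.highPt w n) (ST.highPt w' n') with hc | hc | hc
    · exfalso
      have hmem := ST.gap_lemma w' n' (Sys.highEnd' w n)
      rw [ST.ψ_highEnd] at hmem
      have hg := ST.lowPt_lt_highPt w n
      rcases hmem with hx | hx
      · linarith
      · linarith
    · exact hc
    · exfalso
      have hmem := ST.gap_lemma w n (Sys.highEnd' w' n')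
      rw [ST.ψ_highEnd] at hmem
      have hg := ST.lowPt_lt_highPt w' n'
      rcases hmem with hx | hx
      · linarith
      · linarith
  apply γT_inj
  have e1 := ST.highPt_sub_lowPt w n
  have e2 := ST.highPt_sub_lowPt w' n'
  rw [← e1, ← e2, hlow, hhigh]

section Conical

open Classical

variable (m : ℕ)

def EAm : Set (Fin m → ℕ → Bool) := {e | ∀ i, e i ∈ EA}

lemma EAm_exists_NN {e : Fin m → ℕ → Bool} (he : e ∈ EAm m) :
    ∃ N, ∀ i, ∀ k, N ≤ k → e i (k+1) = !(e i k) := by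
  choose Ni hNi using he
  refine ⟨Finset.univ.sup Ni, fun i k hk => ?_⟩
  exact hNi i k (le_trans (Finset.le_sup (Finset.mem_univ i)) hk)

noncomputable def NN (e : Fin m → ℕ → Bool) : ℕ :=
  if h : ∃ N, ∀ i, ∀ k, N ≤ k → e i (k+1) = !(e i k) then h.choose else 0

lemma NN_spec {e : Fin m → ℕ → Bool} (he : e ∈ EAm m) :
    ∀ i, ∀ k, NN m e ≤ k → e i (k+1) = !(e i k) := by
  have h := EAm_exists_NN m he
  unfold NN
  rw [dif_pos h]
  exact h.choose_spec

noncomputable def vpt (e : Fin m → ℕ → Bool) (n : ℕ) : EuclideanSpace ℝ (Fin m) :=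
  toEuc (fun i => ST.base (e i) n + ST.σ (n+1) + (1/3:ℝ)^n * (1/2)^(NN m e) / 10)

noncomputable def qpt (e : Fin m → ℕ → Bool) : EuclideanSpace ℝ (Fin m) :=
  toEuc (fun i => ST.ψ (e i))

def tsc (n p : ℕ) : ℝ := (1/3:ℝ)^n * (1/4)^p / 100

lemma tsc_pos (n p : ℕ) : 0 < tsc n p := by unfold tsc; positivity

lemma vpt_close (e : Fin m → ℕ → Bool) (n : ℕ) :
    ‖qpt m e - vpt m e n‖ ≤ ((m:ℝ)+1) * (2 * (1/3)^n) := by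
  apply norm_le_of_coord (by positivity)
  intro i
  have hsub : (qpt m e - vpt m e n) i = qpt m e i - vpt m e n i := by simp
  have hq : qpt m e i = ST.ψ (e i) := rfl
  have hv : vpt m e n i = ST.base (e i) n + ST.σ (n+1) + (1/3:ℝ)^n * (1/2)^(NN m e) / 10 := rfl
  rw [hsub, hq, hv]
  have h1 := ST.partial_le_ψ (e i) n
  have h2 := ST.ψ_le_partial_add (e i) n
  have hBeq : ST.base (e i) n = ∑ k ∈ Finset.range n, ST.term (e i) k := rfl
  rw [← hBeq] at h1 h2
  have h3 : ST.σ n = (1/3:ℝ)^n := rfl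
  have h4 : ST.σ (n+1) = (1/3:ℝ)^(n+1) := rfl
  have h5 : ((1:ℝ)/2)^(NN m e) ≤ 1 :=
    pow_le_one₀ (by norm_num) (by norm_num)
  have h6 : ((1:ℝ)/3)^(n+1) ≤ (1/3:ℝ)^n :=
    pow_le_pow_of_le_one (by norm_num) (by norm_num) (by omega)
  have h7 : (0:ℝ) < (1/3:ℝ)^n := by positivity
  have h8 : (0:ℝ) ≤ (1/3:ℝ)^n * (1/2)^(NN m e) / 10 := by positivity
  have h9 : (1/3:ℝ)^n * (1/2)^(NN m e) / 10 ≤ (1/3:ℝ)^n := by nlinarith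
  have h10 : (0:ℝ) ≤ (1/3:ℝ)^(n+1) := by positivity
  rw [abs_le]
  constructor
  · linarith [h1, h2]
  · linarith [h1, h2]

def EB : Set (ℝ × EuclideanSpace ℝ (Fin m)) :=
  {y | ∃ e ∈ EAm m, ∃ n, NN m e ≤ n ∧ y = (tsc n (NN m e), vpt m e n)}

lemma EB_upperHalf : EB m ⊆ upperHalf (EuclideanSpace ℝ (Fin m)) := by
  rintro y ⟨e, he, n, hn, rfl⟩
  exact tsc_pos n (NN m e)

lemma Bm_subset : Bm m ⊆ conicalLimitSet (EB m) := by
  intro q hq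
  have hdig : ∀ i, ∃ d, d ∈ EA ∧ ST.ψ d = q i := fun i => hq i
  choose dg hdgEA hdg using hdig
  have hem : dg ∈ EAm m := hdgEA
  set p := NN m dg with hp
  have hqq : q = qpt m dg := by
    apply PiLp.ext
    intro i
    simp [qpt, toEuc, hdg i]
  refine ⟨200*((m:ℝ)+1)*4^p, by positivity, fun j => (tsc (p+j) p, vpt m dg (p+j)), ?_, ?_, ?_, ?_⟩
  · intro j
    exact ⟨dg, hem, p+j, by omega, rfl⟩
  · -- scales tend to 0
    show Tendsto (fun j : ℕ => tsc (p+j) p) atTop (𝓝 0)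
    unfold tsc
    have : (fun j : ℕ => (1/3:ℝ)^(p+j) * (1/4)^p / 100)
        = fun j : ℕ => ((1/3:ℝ)^p * (1/4)^p / 100) * (1/3)^j := by
      funext j
      rw [pow_add]
      ring
    rw [this]
    have hg : Tendsto (fun j : ℕ => ((1:ℝ)/3)^j) atTop (𝓝 0) :=
      tendsto_pow_atTop_nhds_zero_of_lt_one (by norm_num) (by norm_num)
    simpa using hg.const_mul ((1/3:ℝ)^p * (1/4)^p / 100)
  · -- centers tend to q
    show Tendsto (fun j : ℕ => vpt m dg (p+j)) atTop (𝓝 q)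
    rw [tendsto_iff_dist_tendsto_zero]
    apply squeeze_zero (fun j => dist_nonneg)
      (g := fun j : ℕ => ((m:ℝ)+1) * (2 * (1/3)^(p+j)))
    · intro j
      rw [dist_eq_norm, hqq, ← norm_sub_rev]
      exact vpt_close m dg (p+j)
    · have : (fun j : ℕ => ((m:ℝ)+1) * (2 * (1/3)^(p+j)))
          = fun j : ℕ => (((m:ℝ)+1) * 2 * (1/3)^p) * (1/3)^j := by
        funext j; rw [pow_add]; ring
      rw [this]
      have hg : Tendsto (fun j : ℕ => ((1:ℝ)/3)^j) atTop (𝓝 0) :=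
        tendsto_pow_atTop_nhds_zero_of_lt_one (by norm_num) (by norm_num)
      simpa using hg.const_mul (((m:ℝ)+1) * 2 * (1/3)^p)
  · -- cone condition
    intro j
    show ‖vpt m dg (p+j) - q‖ ≤ 200*((m:ℝ)+1)*4^p * tsc (p+j) p
    rw [hqq, norm_sub_rev]
    have h1 := vpt_close m dg (p+j)
    have h2 : 200*((m:ℝ)+1)*4^p * tsc (p+j) p = ((m:ℝ)+1) * (2 * (1/3)^(p+j)) := by
      have h4 : (4:ℝ)^p * (1/4:ℝ)^p = 1 := by
        rw [← mul_pow]; norm_num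
      unfold tsc
      calc 200*((m:ℝ)+1)*4^p * ((1/3:ℝ)^(p+j) * (1/4)^p / 100)
          = ((m:ℝ)+1) * (2 * (1/3:ℝ)^(p+j)) * ((4:ℝ)^p * (1/4:ℝ)^p) := by ring
        _ = ((m:ℝ)+1) * (2 * (1/3:ℝ)^(p+j)) := by rw [h4, mul_one]
    rw [h2]
    exact h1

end Conical

section ConicalConverse

variable (m : ℕ)

set_option maxHeartbeats 2000000 in
lemma conical_subset_Bm (hm : 1 ≤ m) : conicalLimitSet (EB m) ⊆ Bm m := by
  classical
  rintro x ⟨K, hK, w, hwE, ht0, hvx, hcone⟩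
  have hdecode : ∀ j, ∃ e, e ∈ EAm m ∧ ∃ n, NN m e ≤ n ∧ w j = (tsc n (NN m e), vpt m e n) :=
    hwE
  choose eS heS nS hnS heq using hdecode
  set pS : ℕ → ℕ := fun j => NN m (eS j) with hpS
  have hw1 : ∀ j, (w j).1 = tsc (nS j) (pS j) := fun j => by rw [heq j]
  have hw2 : ∀ j, (w j).2 = vpt m (eS j) (nS j) := fun j => by rw [heq j]
  by_cases hI : ∃ P, {j | pS j = P}.Infinite
  · -- Case I : one parameter value occurs infinitely often
    obtain ⟨P, hPinf⟩ := hI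
    set SP : Set (Fin m → ℕ → Bool) :=
      {e | ∀ i, ∀ k, P ≤ k → e i (k+1) = !(e i k)} with hSP
    have hSPfin : SP.Finite := by
      have h1 : SP = Set.pi Set.univ
          (fun _ : Fin m => {d : ℕ → Bool | ∀ k, P ≤ k → d (k+1) = !(d k)}) := by
        ext e
        simp [hSP, Set.mem_pi]
      rw [h1]
      exact Set.Finite.pi (fun _ => EA_slice_finite P)
    have hfib : ∃ e ∈ SP, {j | pS j = P ∧ eS j = e}.Infinite := by
      by_contra hc
      push_neg at hc
      have hsub : {j | pS j = P} ⊆ ⋃ e ∈ SP, {j | pS j = P ∧ eS j = e} := by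
        intro j hj
        have hjP : pS j = P := hj
        have hmem : eS j ∈ SP := by
          intro i k hk
          have hP' : NN m (eS j) = P := hjP
          exact NN_spec m (heS j) i k (by omega)
        exact Set.mem_biUnion hmem ⟨hjP, rfl⟩
      have hfin : (⋃ e ∈ SP, {j | pS j = P ∧ eS j = e}).Finite :=
        Set.Finite.biUnion hSPfin (fun e he => hc e he)
      exact hPinf (Set.Finite.subset hfin hsub)
    obtain ⟨estar, hestarSP, hJinf⟩ := hfib
    obtain ⟨j₀, hj₀⟩ := hJinf.nonempty
    have hestarEAm : estar ∈ EAm m := by rw [← hj₀.2]; exact heS j₀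
    have hxq : x = qpt m estar := by
      by_contra hne
      have hd : 0 < ‖x - qpt m estar‖ := by
        rw [norm_pos_iff]
        intro hc
        exact hne (by rwa [sub_eq_zero] at hc)
      set D := K + 200*((m:ℝ)+1)*4^P + 1 with hD
      have hDpos : 0 < D := by positivity
      have hev : ∀ᶠ j in atTop, (w j).1 < ‖x - qpt m estar‖ / D :=
        ht0.eventually (gt_mem_nhds (by positivity))
      obtain ⟨J₁, hJ₁⟩ := Filter.eventually_atTop.mp hev
      have hnotsub : ¬ {j | pS j = P ∧ eS j = estar} ⊆ Set.Iic J₁ := by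
        intro hsub
        exact hJinf ((Set.finite_Iic J₁).subset hsub)
      obtain ⟨j, hjJ, hjge'⟩ := Set.not_subset.mp hnotsub
      have hjge : J₁ ≤ j := by
        simp only [Set.mem_Iic, not_le] at hjge'
        omega
      have hjP : pS j = P := hjJ.1
      have hje : eS j = estar := hjJ.2
      set t := (w j).1 with htdef
      have htpos : 0 < t := by
        rw [htdef, hw1 j]
        exact tsc_pos _ _
      have htval : t = tsc (nS j) P := by rw [htdef, hw1 j, hjP]
      have hpow : ((1:ℝ)/3)^(nS j) = 100 * 4^P * t := by
        rw [htval]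
        unfold tsc
        have h4 : (4:ℝ)^P * (1/4:ℝ)^P = 1 := by rw [← mul_pow]; norm_num
        field_simp
        nlinarith [h4]
      have hvq : ‖(w j).2 - qpt m estar‖ ≤ ((m:ℝ)+1) * (2 * (1/3)^(nS j)) := by
        rw [hw2 j, hje, norm_sub_rev]
        exact vpt_close m estar (nS j)
      have hxv : ‖(w j).2 - x‖ ≤ K * t := hcone j
      have htot : ‖x - qpt m estar‖ ≤ (K + 200*((m:ℝ)+1)*4^P) * t := by
        have h1 : ‖x - qpt m estar‖ ≤ ‖x - (w j).2‖ + ‖(w j).2 - qpt m estar‖ :=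
          norm_sub_le_norm_sub_add_norm_sub x ((w j).2) (qpt m estar)
        have h2 : ‖x - (w j).2‖ = ‖(w j).2 - x‖ := norm_sub_rev _ _
        have h3 : ((m:ℝ)+1) * (2 * (1/3)^(nS j)) = 200*((m:ℝ)+1)*4^P * t := by
          rw [hpow]; ring
        rw [h2] at h1
        rw [h3] at hvq
        linarith
      have hlt : t < ‖x - qpt m estar‖ / D := hJ₁ j hjge
      have : ‖x - qpt m estar‖ < D * (‖x - qpt m estar‖ / D) := by
        calc ‖x - qpt m estar‖ ≤ (K + 200*((m:ℝ)+1)*4^P) * t := htot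
          _ < D * t := by
              apply mul_lt_mul_of_pos_right _ htpos
              rw [hD]; linarith
          _ ≤ D * (‖x - qpt m estar‖ / D) := by
              exact mul_le_mul_of_nonneg_left (le_of_lt hlt) (le_of_lt hDpos)
      rw [mul_div_cancel₀ _ (ne_of_gt hDpos)] at this
      linarith
    rw [hxq]
    intro i
    exact ⟨estar i, hestarEAm i, rfl⟩
  · -- Case II : parameters tend to infinity -- impossible
    exfalso
    push_neg at hI
    have hfin : ∀ P, {j | pS j = P}.Finite := fun P => hI P
    have hptend : Tendsto pS atTop atTop := by
      rw [Filter.tendsto_atTop]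
      intro b
      have hfin2 : {j | pS j < b}.Finite := by
        have hsub : {j | pS j < b} ⊆ ⋃ Q ∈ Finset.range b, {j | pS j = Q} := by
          intro j hj
          have : pS j < b := hj
          exact Set.mem_biUnion (Finset.mem_range.mpr this) rfl
        exact ((Finset.range b).finite_toSet.biUnion (fun Q _ => hfin Q)).subset hsub
      have hev : ∀ᶠ j in Filter.cofinite, j ∉ {j | pS j < b} := hfin2.eventually_cofinite_notMem
      rw [Nat.cofinite_eq_atTop] at hev
      exact hev.mono (fun j hj => by simp only [Set.mem_setOf_eq] at hj; omega)
    set i0 : Fin m := ⟨0, hm⟩ with hi0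
    -- scale tendsto
    have hhalf : Tendsto (fun j => ((1:ℝ)/2)^(pS j)) atTop (𝓝 0) :=
      (tendsto_pow_atTop_nhds_zero_of_lt_one (by norm_num) (by norm_num)).comp hptend
    have hevK : ∀ᶠ j in atTop, K * ((1:ℝ)/2)^(pS j) < 5 := by
      have := hhalf.const_mul K
      simp only [mul_zero] at this
      exact this.eventually (gt_mem_nhds (by norm_num))
    -- the key gap facts for large j
    have hkey : ∀ j, K * ((1:ℝ)/2)^(pS j) < 5 →
        (ST.lowPt (eS j i0) (nS j) + (1/3:ℝ)^(nS j) * (1/2)^(pS j)/20 ≤ x i0 ∧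
         x i0 ≤ ST.lowPt (eS j i0) (nS j) + (1/3:ℝ)^(nS j) * (1/2)^(pS j) * (3/20) ∧
         x i0 ∈ Set.Ioo (ST.lowPt (eS j i0) (nS j)) (ST.highPt (eS j i0) (nS j))) := by
      intro j hKj
      set n := nS j with hn
      set p := pS j with hp
      set b := ST.lowPt (eS j i0) n with hb
      have hvcoord : (w j).2 i0 = b + (1/3:ℝ)^n * (1/2)^p / 10 := by
        rw [hw2 j]
        rfl
      have hcoord : |(w j).2 i0 - x i0| ≤ K * ((1/3:ℝ)^n * (1/4)^p / 100) := by
        have h1 : |((w j).2 - x) i0| ≤ ‖(w j).2 - x‖ := coord_le_norm _ i0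
        have h2 : ((w j).2 - x) i0 = (w j).2 i0 - x i0 := by simp
        have h3 := hcone j
        rw [hw1 j] at h3
        rw [h2] at h1
        exact le_trans h1 h3
      have hq4 : ((1:ℝ)/4)^p = (1/2:ℝ)^p * (1/2)^p := by
        rw [← mul_pow]; norm_num
      have habs := abs_le.mp hcoord
      have hpow3 : (0:ℝ) < (1/3:ℝ)^n := by positivity
      have hpow2 : (0:ℝ) < (1/2:ℝ)^p := by positivity
      have hKt : K * ((1/3:ℝ)^n * (1/4)^p / 100) ≤ (1/3:ℝ)^n * (1/2)^p / 20 := by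
        have hmul := mul_le_mul_of_nonneg_right (le_of_lt hKj)
          (show (0:ℝ) ≤ (1/3:ℝ)^n * (1/2)^p / 100 by positivity)
        rw [hq4]
        nlinarith [hmul]
      have hlow : b + (1/3:ℝ)^n * (1/2)^p/20 ≤ x i0 := by
        have : x i0 ≥ (w j).2 i0 - K * ((1/3:ℝ)^n * (1/4)^p / 100) := by linarith [habs.1]
        rw [hvcoord] at this
        nlinarith [hKt, hpow3, hpow2]
      have hup : x i0 ≤ b + (1/3:ℝ)^n * (1/2)^p * (3/20) := by
        have : x i0 ≤ (w j).2 i0 + K * ((1/3:ℝ)^n * (1/4)^p / 100) := by linarith [habs.2]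
        rw [hvcoord] at this
        nlinarith [hKt]
      refine ⟨hlow, hup, ?_, ?_⟩
      · have : (0:ℝ) < (1/3:ℝ)^n * (1/2)^p/20 := by positivity
        linarith
      · have hgap : ST.highPt (eS j i0) n - b = ST.γ n := by
          rw [hb]
          exact ST.highPt_sub_lowPt (eS j i0) n
        have hγ : ST.γ n = (1/3:ℝ)^(n+1) := γT_eq n
        have h13 : (1/3:ℝ)^(n+1) = (1/3:ℝ)^n / 3 := by ring
        have hhalf1 : (1/2:ℝ)^p ≤ 1 := pow_le_one₀ (by norm_num) (by norm_num)
        have h5 : (1/3:ℝ)^n * (1/2)^p * (3/20) ≤ (1/3:ℝ)^n * (3/20) := by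
          nlinarith [hpow3, hhalf1, hpow2]
        linarith [hup, hgap, hγ, h13, h5]
    obtain ⟨J₀, hJ₀⟩ := Filter.eventually_atTop.mp hevK
    have hbase := hkey J₀ (hJ₀ J₀ le_rfl)
    set n := nS J₀ with hn0
    set b := ST.lowPt (eS J₀ i0) n with hb0
    set c := x i0 - b with hc0
    have hcpos : 0 < c := by
      have h := hbase.2.2
      rw [Set.mem_Ioo] at h
      rw [hc0]
      linarith [h.1]
    -- all later gaps coincide with this one
    have hsame : ∀ j, J₀ ≤ j → K * ((1:ℝ)/2)^(pS j) < 5 →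
        ST.lowPt (eS j i0) (nS j) = b ∧ nS j = n := by
      intro j hj hKj
      have h1 := (hkey j hKj).2.2
      have h2 := hbase.2.2
      have := gap_rigid h1 h2
      exact ⟨this.1, this.2⟩
    -- choose j with very small (1/2)^(pS j)
    have hev2 : ∀ᶠ j in atTop, (1/3:ℝ)^n * ((1:ℝ)/2)^(pS j) * (3/20) < c := by
      have h2 := hhalf.const_mul ((1/3:ℝ)^n * (3/20))
      simp only [mul_zero] at h2
      have h3 : Tendsto (fun j => (1/3:ℝ)^n * ((1:ℝ)/2)^(pS j) * (3/20)) atTop (𝓝 0) := by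
        have : (fun j => (1/3:ℝ)^n * ((1:ℝ)/2)^(pS j) * (3/20))
            = fun j => ((1/3:ℝ)^n * (3/20)) * ((1:ℝ)/2)^(pS j) := by
          funext j; ring
        rw [this]
        simpa using h2
      exact h3.eventually (gt_mem_nhds hcpos)
    obtain ⟨J₁, hJ₁⟩ := Filter.eventually_atTop.mp (hev2.and hevK)
    set j := max J₀ J₁ with hjdef
    have hjge : J₀ ≤ j := le_max_left _ _
    obtain ⟨hjsmall, hjK⟩ := hJ₁ j (le_max_right _ _)
    obtain ⟨hbeq, hneq⟩ := hsame j hjge hjK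
    have hup := (hkey j hjK).2.1
    rw [hbeq, hneq] at hup
    rw [hc0] at hjsmall
    linarith [hup, hjsmall]
  

end ConicalConverse

/-! ### assembling the homeomorphism of `ℝ^m` -/

def eqE (m : ℕ) : EuclideanSpace ℝ (Fin m) ≃ₜ (Fin m → ℝ) where
  toEquiv := WithLp.equiv 2 (Fin m → ℝ)
  continuous_toFun := PiLp.continuous_ofLp 2 (fun _ : Fin m => ℝ)
  continuous_invFun := PiLp.continuous_toLp 2 (fun _ : Fin m => ℝ)

def H (m : ℕ) : EuclideanSpace ℝ (Fin m) ≃ₜ EuclideanSpace ℝ (Fin m) :=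
  (eqE m).trans ((Homeomorph.piCongrRight (fun _ : Fin m => fHomeo)).trans (eqE m).symm)

lemma H_apply (m : ℕ) (x : EuclideanSpace ℝ (Fin m)) (i : Fin m) :
    H m x i = ff (x i) := rfl

lemma H_image (m : ℕ) : (H m) '' (Am m) = Bm m := by
  ext y
  constructor
  · rintro ⟨a, ha, rfl⟩
    intro i
    rw [H_apply m a i]
    obtain ⟨d, hd, hda⟩ := ha i
    rw [← hda, fψ]
    exact ⟨d, hd, rfl⟩
  · intro hy
    have hco : ∀ i, ∃ u, u ∈ DF ∧ ff u = y i := by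
      intro i
      obtain ⟨d, hd, hdy⟩ := hy i
      exact ⟨SF.ψ d, ⟨d, hd, rfl⟩, by rw [fψ, hdy]⟩
    choose u hu hfu using hco
    refine ⟨toEuc u, fun i => hu i, ?_⟩
    apply PiLp.ext
    intro i
    rw [H_apply m (toEuc u) i, toEuc_apply]
    exact hfu i

lemma conical_Bm (m : ℕ) (hm : 1 ≤ m) : IsConicalLimitSet (Bm m) :=
  ⟨EB m, EB_upperHalf m,
    subset_antisymm (conical_subset_Bm m hm) (Bm_subset m)⟩

end
end CCLaux

/-- For every `m ≥ 1` there are a homeomorphism `h` of `ℝ^m` and a countable set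
`A ⊆ ℝ^m` such that `A` is not a conical limit set but `h(A)` is. -/
theorem conicalLimitSets_not_topologically_invariant (m : ℕ) (hm : 1 ≤ m) :
    ∃ h : EuclideanSpace ℝ (Fin m) ≃ₜ EuclideanSpace ℝ (Fin m),
      ∃ A : Set (EuclideanSpace ℝ (Fin m)), A.Countable ∧
        ¬ IsConicalLimitSet A ∧ IsConicalLimitSet (⇑h '' A) := by
  refine ⟨CCLaux.H m, CCLaux.Am m, CCLaux.countable_Am m, CCLaux.not_conical_Am m hm, ?_⟩
  rw [CCLaux.H_image m]
  exact CCLaux.conical_Bm m hm
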